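/- arXiv:1301.0510 — 6 statements merged into one kernel-verified Lean document; each statement's English description precedes it below -/
import Mathlib

section
/- Let G be a group, H a subgroup of G, and θ : H → G an injective group homomorphism, and let HNN(G,H,θ) denote the corresponding HNN extension. Let k ≥ 1, let n₁,…,n_k be nonzero integers, and let g₀,…,g_k ∈ G be such that: g_i ≠ e for every i ∈ {1,…,k−1}; for every i ∈ {1,…,k−1} with n_i > 0 and n_{i+1} < 0 one has g_i ∉ H; and for every i ∈ {1,…,k−1} with n_i < 0 and n_{i+1} > 0 one has g_i ∉ θ(H). Then the element g₀ t^{n₁} g₁ t^{n₂} ⋯ t^{n_k} g_k is not equal to the identity in HNN(G,H,θ). -/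
open HNNExtension NormalWord List

section BrittonAux

variable {G : Type*} [Group G] {A B : Subgroup G} {φ : A ≃* B}

/-- A block `t^u t^u ⋯ t^u x` of length `m+1`. -/
def brittonBlk (u : ℤˣ) (m : ℕ) (x : G) : List (ℤˣ × G) :=
  List.replicate m (u, 1) ++ [(u, x)]

lemma brittonBlk_ne_nil (u : ℤˣ) (m : ℕ) (x : G) : brittonBlk u m x ≠ [] := by
  simp [brittonBlk]

lemma brittonBlk_fst (u : ℤˣ) (m : ℕ) (x : G) : ∀ p ∈ brittonBlk u m x, p.1 = u := by
  intro p hp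
  rcases List.mem_append.1 hp with h | h
  · rw [List.eq_of_mem_replicate h]
  · simp at h; rw [h]

lemma brittonBlk_getLast? (u : ℤˣ) (m : ℕ) (x : G) :
    (brittonBlk u m x).getLast? = some (u, x) :=
  List.getLast?_concat

lemma brittonBlk_chain' (u : ℤˣ) (m : ℕ) (x : G) :
    (brittonBlk u m x).IsChain (fun a b => a.2 ∈ toSubgroup A B a.1 → a.1 = b.1) := by
  have h : (brittonBlk u m x).IsChain (fun a b : ℤˣ × G => a.1 = b.1) := by
    induction m with
    | zero => simp [brittonBlk]
    | succ m ih =>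
      rw [brittonBlk, List.replicate_succ, List.cons_append, List.isChain_cons]
      exact ⟨fun p hp => (brittonBlk_fst u m x p (List.mem_of_mem_head? hp)).symm, ih⟩
  exact List.IsChain.imp (fun a b hab (_ : a.2 ∈ toSubgroup A B a.1) => hab) h

lemma brittonBlk_prod (φ : A ≃* B) (u : ℤˣ) (m : ℕ) (x : G) :
    ((brittonBlk u m x).map
        (fun p => (t : HNNExtension G A B φ) ^ (p.1 : ℤ) * of p.2)).prod
      = t ^ ((u : ℤ) * (m + 1)) * of x := by
  induction m with
  | zero => simp [brittonBlk]
  | succ m ih =>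
    rw [brittonBlk, List.replicate_succ, List.cons_append, List.map_cons, List.prod_cons,
      show (List.replicate m ((u : ℤˣ), (1 : G)) ++ [(u, x)]) = brittonBlk u m x from rfl, ih,
      map_one, mul_one, ← mul_assoc, ← zpow_add]
    congr 2
    push_cast
    ring

end BrittonAux
/-- **Britton's Lemma.** Let `G` be a group, `H ≤ G` a subgroup and `θ : H → G` an injective
group homomorphism, and form the HNN extension `HNNExtension G H θ.range φ` (where
`φ : H ≃* θ.range` is the isomorphism induced by `θ`), in which `t h t⁻¹ = θ h` for `h ∈ H`.
If `k ≥ 1`, the integers `n₁, …, n_k` are nonzero, `g₁, …, g_{k-1}` are nontrivial, and the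
word `g₀ t^{n₁} g₁ ⋯ t^{n_k} g_k` is reduced (no pinches `t g_i t⁻¹` with `g_i ∈ H` and no
pinches `t⁻¹ g_i t` with `g_i ∈ θ(H)`), then this word is not the identity. -/
theorem britton_lemma {G : Type*} [Group G] (H : Subgroup G) (θ : H →* G)
    (hθ : Function.Injective θ)
    (k : ℕ) (hk : 1 ≤ k) (nn : ℕ → ℤ) (g : ℕ → G)
    (hn : ∀ i, 1 ≤ i → i ≤ k → nn i ≠ 0)
    (hg : ∀ i, 1 ≤ i → i ≤ k - 1 → g i ≠ 1)
    (hpinch₁ : ∀ i, 1 ≤ i → i ≤ k - 1 → 0 < nn i → nn (i + 1) < 0 → g i ∉ H)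
    (hpinch₂ : ∀ i, 1 ≤ i → i ≤ k - 1 → nn i < 0 → 0 < nn (i + 1) → g i ∉ θ.range) :
    HNNExtension.of (g 0) *
        ((List.range k).map fun i =>
          (HNNExtension.t : HNNExtension G H θ.range (MonoidHom.ofInjective hθ)) ^ nn (i + 1) *
            HNNExtension.of (g (i + 1))).prod ≠ 1 := by
  set φ := MonoidHom.ofInjective hθ with hφ
  set u : ℕ → ℤˣ := fun i => if 0 < nn i then 1 else -1 with hu
  have habs : ∀ i, 1 ≤ i → i ≤ k →
      ((u i : ℤ)) * ((((nn i).natAbs - 1 : ℕ) : ℤ) + 1) = nn i := by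
    intro i h1 h2
    have h0 := hn i h1 h2
    have hna : (((nn i).natAbs - 1 : ℕ) : ℤ) + 1 = ((nn i).natAbs : ℤ) := by
      have : 1 ≤ (nn i).natAbs := by omega
      push_cast [this]
      ring
    rw [hna]
    rcases lt_or_gt_of_ne h0 with hlt | hgt
    · rw [hu]; simp only [if_neg (by omega : ¬ 0 < nn i), Units.val_neg,
        Units.val_one, neg_mul, one_mul]
      omega
    · rw [hu]; simp only [if_pos hgt, Units.val_one, one_mul]
      omega
  set L : List (List (ℤˣ × G)) :=
    (List.range k).map fun i => brittonBlk (u (i+1)) ((nn (i+1)).natAbs - 1) (g (i+1)) with hL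
  have hnil : [] ∉ L := by
    rw [hL, List.mem_map]
    rintro ⟨i, -, h⟩
    exact brittonBlk_ne_nil _ _ _ h
  have hchain : L.flatten.IsChain
      (fun a b : ℤˣ × G => a.2 ∈ toSubgroup H θ.range a.1 → a.1 = b.1) := by
    rw [List.isChain_flatten hnil]
    constructor
    · intro l hl
      rw [hL, List.mem_map] at hl
      obtain ⟨i, -, rfl⟩ := hl
      exact brittonBlk_chain' _ _ _
    · rw [hL, List.isChain_map]
      obtain ⟨k', rfl⟩ : ∃ k', k = k' + 1 := ⟨k - 1, by omega⟩
      rw [List.isChain_range_succ]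
      intro m hm p hp q hq hmem
      rw [brittonBlk_getLast?, Option.mem_some_iff] at hp
      subst hp
      have hq1 : q.1 = u (m + 1 + 1) :=
        brittonBlk_fst _ _ _ q (List.mem_of_mem_head? hq)
      rw [hq1]
      set i := m + 1 with hi
      have h1 : 1 ≤ i := by omega
      have h2 : i ≤ k' + 1 - 1 := by omega
      have hni := hn i h1 (by omega)
      have hni1 := hn (i + 1) (by omega) (by omega)
      rcases lt_or_gt_of_ne hni with hlt | hgt <;>
        rcases lt_or_gt_of_ne hni1 with hlt1 | hgt1
      · rw [hu]; simp only [if_neg (by omega : ¬ 0 < nn i),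
          if_neg (by omega : ¬ 0 < nn (i+1))]
      · exfalso
        apply hpinch₂ i h1 h2 hlt hgt1
        simpa [hu, if_neg (by omega : ¬ 0 < nn i)] using hmem
      · exfalso
        apply hpinch₁ i h1 h2 hgt hlt1
        simpa [hu, if_pos hgt] using hmem
      · rw [hu]; simp only [if_pos hgt, if_pos hgt1]
  set w : ReducedWord G H θ.range := ⟨g 0, L.flatten, hchain⟩ with hw
  have hprod : w.prod φ = HNNExtension.of (g 0) *
      ((List.range k).map fun i =>
        (HNNExtension.t : HNNExtension G H θ.range φ) ^ nn (i + 1) *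
          HNNExtension.of (g (i + 1))).prod := by
    rw [ReducedWord.prod]
    congr 1
    rw [show w.toList = L.flatten from rfl, List.map_flatten, List.prod_flatten, hL,
      List.map_map, List.map_map]
    congr 1
    apply List.map_congr_left
    intro i hi
    rw [List.mem_range] at hi
    simp only [Function.comp_apply]
    rw [brittonBlk_prod, habs (i + 1) (by omega) (by omega)]
  intro hone
  have hmem : w.prod φ ∈ (HNNExtension.of.range :
      Subgroup (HNNExtension G H θ.range φ)) := by
    rw [hprod, hone]; exact one_mem _
  have hnilw := ReducedWord.toList_eq_nil_of_mem_of_range φ w hmem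
  rw [show w.toList = L.flatten from rfl, List.flatten_eq_nil_iff] at hnilw
  have h0 : brittonBlk (u 1) ((nn 1).natAbs - 1) (g 1) ∈ L := by
    rw [hL]
    exact List.mem_map_of_mem (List.mem_range.2 (by omega))
  exact brittonBlk_ne_nil _ _ _ (hnilw _ h0)
end

section
/- Let n, m be integers with 2 ≤ n < |m| and let G be the subgroup of BS(n,m) generated by a and b⁻¹ab. Then the centralizer of G in BS(n,m) equals the subgroup {a^{nk} : k ∈ ℤ} generated by a^n. -/
/-- The single relator `b a^n b⁻¹ a^{-m}` of the Baumslag–Solitar group `BS(n,m)`. -/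
def BSRels (n m : ℤ) : Set (FreeGroup Bool) :=
  {FreeGroup.of true * FreeGroup.of false ^ n * (FreeGroup.of true)⁻¹ *
    FreeGroup.of false ^ (-m)}

/-- The Baumslag–Solitar group `BS(n,m) = ⟨a, b ∣ b a^n b⁻¹ = a^m⟩`. -/
abbrev BS (n m : ℤ) := PresentedGroup (BSRels n m)

/-- The canonical generator `a` of `BS(n,m)`. -/
def BS.a (n m : ℤ) : BS n m := PresentedGroup.of false

/-- The canonical generator `b` of `BS(n,m)`. -/
def BS.b (n m : ℤ) : BS n m := PresentedGroup.of true

open HNNExtension Subgroup Multiplicative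


namespace BSAux

variable {G : Type*} [CommGroup G] {A B : Subgroup G} {φ : A ≃* B}

theorem rw_prod_def (w : HNNExtension.NormalWord.ReducedWord G A B) :
    w.prod φ = HNNExtension.of w.head *
      (w.toList.map (fun x => (t : HNNExtension G A B φ) ^ (x.1 : ℤ) *
        HNNExtension.of x.2)).prod := rfl

theorem mem_range_of_comm {g : G} (hA : g ∉ A) (hB : g ∉ B)
    {y : HNNExtension G A B φ} (hy : y * of g = of g * y) :
    y ∈ (of : G →* HNNExtension G A B φ).range := by
  obtain ⟨d⟩ := NormalWord.TransversalPair.nonempty G A B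
  set w : NormalWord d := NormalWord.equiv φ d y with hwdef
  have hw : w.prod φ = y := (NormalWord.equiv φ d).symm_apply_apply y
  rcases List.eq_nil_or_concat w.toList with hnil | ⟨l, c, hl⟩
  · refine ⟨w.head, ?_⟩
    rw [← hw, rw_prod_def, hnil]
    simp
  · exfalso
    rw [List.concat_eq_append] at hl
    have hc := w.chain
    rw [hl] at hc
    have hchain : (l ++ [(c.1, c.2 * g)]).Chain'
        (fun a b => a.2 ∈ toSubgroup A B a.1 → a.1 = b.1) := by
      show List.IsChain _ _
      rw [List.isChain_append] at hc ⊢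
      refine ⟨hc.1, List.isChain_singleton _, fun x hx y hy' => ?_⟩
      simp only [List.head?_cons, Option.mem_def, Option.some.injEq] at hy'
      subst hy'
      exact hc.2.2 x hx c (by simp)
    set r1 : NormalWord.ReducedWord G A B := ⟨w.head, l ++ [(c.1, c.2 * g)], hchain⟩ with hr1def
    set r2 : NormalWord.ReducedWord G A B := ⟨g * w.head, l ++ [c], hc⟩ with hr2def
    have hwy : y = HNNExtension.of (w.head : G) * ((l ++ [c]).map
        (fun x => (t : HNNExtension G A B φ) ^ (x.1 : ℤ) * HNNExtension.of x.2)).prod := by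
      rw [← hw, rw_prod_def, hl]
    have hr1 : r1.prod φ = y * of g := by
      rw [rw_prod_def, hwy]
      simp [r1, List.map_append, mul_assoc]
    have hr2 : r2.prod φ = of g * y := by
      rw [rw_prod_def, hwy]
      show HNNExtension.of (g * w.head) * _ = _
      rw [map_mul, mul_assoc]
    have hEq : r1.prod φ = r2.prod φ := by rw [hr1, hr2, hy]
    obtain ⟨-, hhead⟩ := ReducedWord.map_fst_eq_and_of_prod_eq φ hEq
    have hne : (l ++ [(c.1, c.2 * g)]) ≠ [] := by simp
    have hu : ((l ++ [(c.1, c.2 * g)]).head hne).1 ∈ r1.toList.head?.map Prod.fst := by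
      show _ ∈ (Option.map Prod.fst (l ++ [(c.1, c.2 * g)]).head?)
      rw [List.head?_eq_head hne]
      simp
    have hgmem := hhead _ hu
    have hsimp : r1.head⁻¹ * r2.head = g := by
      show w.head⁻¹ * (g * w.head) = g
      rw [mul_comm g w.head, ← mul_assoc, inv_mul_cancel, one_mul]
    rw [hsimp] at hgmem
    rcases Int.units_eq_one_or (-((l ++ [(c.1, c.2 * g)]).head hne).1) with h | h <;>
      rw [h] at hgmem
    · exact hA hgmem
    · exact hB hgmem

theorem not_mem_range_conj {g : G} (hA : g ∉ A) :
    (t * of g * t⁻¹ : HNNExtension G A B φ) ∉ (of : G →* HNNExtension G A B φ).range := by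
  intro h
  have hchain : ([((1 : ℤˣ), g), ((-1 : ℤˣ), 1)] : List (ℤˣ × G)).Chain'
      (fun a b => a.2 ∈ toSubgroup A B a.1 → a.1 = b.1) := by
    refine List.isChain_cons_cons.2 ⟨fun hgA => absurd hgA hA, List.isChain_singleton _⟩
  set r : NormalWord.ReducedWord G A B := ⟨1, [((1 : ℤˣ), g), ((-1 : ℤˣ), 1)], hchain⟩
  have hprod : r.prod φ = t * of g * t⁻¹ := by
    rw [rw_prod_def]
    simp [r, mul_assoc]
  have := ReducedWord.toList_eq_nil_of_mem_of_range φ r (by rw [hprod]; exact h)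
  simp [r] at this

end BSAux


namespace BSAux

theorem BS_rel (n m : ℤ) : BS.b n m * BS.a n m ^ n * (BS.b n m)⁻¹ = BS.a n m ^ m := by
  have h : (PresentedGroup.mk (BSRels n m)) (FreeGroup.of true * FreeGroup.of false ^ n *
      (FreeGroup.of true)⁻¹ * FreeGroup.of false ^ (-m)) = 1 := by
    apply (QuotientGroup.eq_one_iff _).2
    exact Subgroup.subset_normalClosure rfl
  rw [map_mul, map_mul, map_mul, map_zpow, map_inv, map_zpow] at h
  have h2 := mul_eq_one_iff_eq_inv.1 h
  rw [zpow_neg, inv_inv] at h2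
  exact h2

theorem BS_rel_pow (n m k : ℤ) :
    BS.b n m * BS.a n m ^ (n * k) * (BS.b n m)⁻¹ = BS.a n m ^ (m * k) := by
  rw [zpow_mul, zpow_mul, ← BS_rel n m, conj_zpow]

abbrev GZ := Multiplicative ℤ

def Agrp (c : ℤ) : Subgroup GZ := Subgroup.zpowers (ofAdd c)

theorem ofAdd_mem_Agrp_iff {c j : ℤ} : (ofAdd j) ∈ Agrp c ↔ c ∣ j := by
  rw [Agrp, Subgroup.mem_zpowers_iff]
  constructor
  · rintro ⟨k, hk⟩
    refine ⟨k, ?_⟩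
    have := congrArg toAdd hk
    simp only [toAdd_zpow, toAdd_ofAdd, smul_eq_mul] at this
    rw [mul_comm]; omega
  · rintro ⟨k, rfl⟩
    exact ⟨k, (Int.ofAdd_mul c k).symm⟩

noncomputable def genEquiv {c : ℤ} (hc : c ≠ 0) : GZ ≃* Agrp c :=
  MulEquiv.ofBijective (zpowersHom _ (⟨ofAdd c, Subgroup.mem_zpowers _⟩ : Agrp c)) (by
    constructor
    · intro x y hxy
      have h' : (ofAdd c : GZ) ^ toAdd x = (ofAdd c : GZ) ^ toAdd y := by
        have := congrArg Subtype.val hxy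
        simpa [zpowersHom_apply] using this
      have h2 := congrArg toAdd h'
      simp only [toAdd_zpow, toAdd_ofAdd, smul_eq_mul] at h2
      have : toAdd x = toAdd y := by
        rcases mul_left_cancel₀ hc (by linarith [h2] : c * toAdd x = c * toAdd y) with h
        exact h
      exact toAdd.injective this
    · rintro ⟨x, k, rfl⟩
      exact ⟨ofAdd k, Subtype.ext (by simp [zpowersHom_apply])⟩)

theorem genEquiv_apply {c : ℤ} (hc : c ≠ 0) (k : ℤ) :
    ((genEquiv hc (ofAdd k) : Agrp c) : GZ) = ofAdd (c * k) := by
  simp [genEquiv, zpowersHom_apply, Int.ofAdd_mul]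
  rfl

noncomputable def φiso {n m : ℤ} (hn : n ≠ 0) (hm : m ≠ 0) : Agrp n ≃* Agrp m :=
  (genEquiv hn).symm.trans (genEquiv hm)

theorem φiso_apply {n m : ℤ} (hn : n ≠ 0) (hm : m ≠ 0) (k : ℤ)
    (h : (ofAdd (n * k) : GZ) ∈ Agrp n) :
    ((φiso hn hm ⟨ofAdd (n * k), h⟩ : Agrp m) : GZ) = ofAdd (m * k) := by
  have h1 : (⟨ofAdd (n * k), h⟩ : Agrp n) = genEquiv hn (ofAdd k) :=
    Subtype.ext (genEquiv_apply hn k).symm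
  rw [h1, φiso, MulEquiv.trans_apply, MulEquiv.symm_apply_apply, genEquiv_apply]


section Maps

variable {n m : ℤ} (hn : n ≠ 0) (hm : m ≠ 0)

theorem ofAdd_one_zpow (c : ℤ) : (ofAdd (1 : ℤ)) ^ c = ofAdd c := by
  rw [← Int.ofAdd_mul, one_mul]

theorem of_ofAdd_zpow (c : ℤ) :
    (HNNExtension.of (ofAdd (1 : ℤ)) : HNNExtension GZ (Agrp n) (Agrp m) (φiso hn hm)) ^ c =
      HNNExtension.of (ofAdd c) := by
  rw [← map_zpow (HNNExtension.of (A := Agrp n) (B := Agrp m) (φ := φiso hn hm)) (ofAdd (1 : ℤ)) c,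
    ofAdd_one_zpow]

noncomputable def ψ : BS n m →* HNNExtension GZ (Agrp n) (Agrp m) (φiso hn hm) :=
  PresentedGroup.toGroup (f := fun x => if x then t else of (ofAdd 1)) (by
    rintro r hr
    rw [show r = FreeGroup.of true * FreeGroup.of false ^ n * (FreeGroup.of true)⁻¹ *
      FreeGroup.of false ^ (-m) from hr]
    simp only [map_mul, map_zpow, map_inv, FreeGroup.lift_apply_of]
    rw [if_pos trivial, if_neg (by decide)]
    rw [of_ofAdd_zpow hn hm, of_ofAdd_zpow hn hm]
    have hmem : (ofAdd n : GZ) ∈ Agrp n := Subgroup.mem_zpowers _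
    have hconj := equiv_eq_conj (φ := φiso hn hm) ⟨ofAdd n, hmem⟩
    have hval : ((φiso hn hm ⟨ofAdd n, hmem⟩ : Agrp m) : GZ) = ofAdd m := by
      have := φiso_apply hn hm 1 (by rw [mul_one]; exact hmem)
      simp only [mul_one] at this
      convert this using 3
    rw [hval] at hconj
    rw [← hconj, ← map_mul]
    have : (ofAdd m : GZ) * ofAdd (-m) = 1 := by
      rw [← ofAdd_add]
      simp
    rw [this, map_one])

@[simp] theorem ψ_a : ψ hn hm (BS.a n m) = of (ofAdd 1) := by
  simp [ψ, BS.a, PresentedGroup.toGroup.of]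

@[simp] theorem ψ_b : ψ hn hm (BS.b n m) = t := by
  simp [ψ, BS.b, PresentedGroup.toGroup.of]

noncomputable def χ : HNNExtension GZ (Agrp n) (Agrp m) (φiso hn hm) →* BS n m :=
  HNNExtension.lift (zpowersHom (BS n m) (BS.a n m)) (BS.b n m) (by
    rintro ⟨x, hx⟩
    obtain ⟨k, rfl⟩ := Subgroup.mem_zpowers_iff.1 hx
    have hc : ((ofAdd n : GZ)) ^ k = ofAdd (n * k) := (Int.ofAdd_mul n k).symm
    have hsub : (⟨(ofAdd n : GZ) ^ k, hx⟩ : Agrp n) = ⟨ofAdd (n * k), hc ▸ hx⟩ :=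
      Subtype.ext hc
    rw [hsub, φiso_apply hn hm k]
    show BS.b n m * (zpowersHom (BS n m) (BS.a n m)) (ofAdd (n * k)) = _
    rw [zpowersHom_apply, zpowersHom_apply, toAdd_ofAdd, toAdd_ofAdd]
    rw [← BS_rel_pow n m k]
    simp [mul_assoc])

theorem χψ (z : BS n m) : χ hn hm (ψ hn hm z) = z := by
  have hcomp : (χ hn hm).comp (ψ hn hm) = MonoidHom.id (BS n m) := by
    apply PresentedGroup.ext
    rintro (_ | _) <;>
      simp [χ, ψ, PresentedGroup.toGroup.of, zpowersHom_apply, BS.a, BS.b, MonoidHom.comp_apply]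
  exact DFunLike.congr_fun hcomp z

end Maps

end BSAux

open HNNExtension Subgroup Multiplicative in
/-- For `2 ≤ n < |m|`, the centralizer in `BS(n,m)` of the subgroup `G = ⟨a, b⁻¹ a b⟩`
equals the subgroup `{a^{nk} : k ∈ ℤ}` generated by `a^n`. -/
theorem BS_centralizer_eq (n m : ℤ) (h1 : 2 ≤ n) (h2 : n < |m|) :
    Subgroup.centralizer
        ((Subgroup.closure {BS.a n m, (BS.b n m)⁻¹ * BS.a n m * BS.b n m} :
          Subgroup (BS n m)) : Set (BS n m)) =
      Subgroup.zpowers (BS.a n m ^ n) := by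
  classical
  have hn : n ≠ 0 := by omega
  have hm : m ≠ 0 := by
    intro h; rw [h] at h2; simp at h2; omega
  have hA1 : (ofAdd (1 : ℤ) : BSAux.GZ) ∉ BSAux.Agrp n := by
    rw [BSAux.ofAdd_mem_Agrp_iff]
    intro hd
    have := Int.le_of_dvd one_pos hd
    omega
  have hB1 : (ofAdd (1 : ℤ) : BSAux.GZ) ∉ BSAux.Agrp m := by
    rw [BSAux.ofAdd_mem_Agrp_iff]
    intro hd
    have := Int.le_of_dvd one_pos ((abs_dvd m 1).2 hd)
    omega
  ext z
  constructor
  · intro hz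
    rw [Subgroup.mem_centralizer_iff] at hz
    have hza : BS.a n m * z = z * BS.a n m :=
      hz _ (Subgroup.subset_closure (Set.mem_insert _ _))
    have hzc : ((BS.b n m)⁻¹ * BS.a n m * BS.b n m) * z =
        z * ((BS.b n m)⁻¹ * BS.a n m * BS.b n m) :=
      hz _ (Subgroup.subset_closure (Set.mem_insert_iff.2 (Or.inr rfl)))
    -- map to the HNN extension
    have h1' : BSAux.ψ hn hm z * of (ofAdd 1) = of (ofAdd 1) * BSAux.ψ hn hm z := by
      have := congrArg (BSAux.ψ hn hm) hza
      simpa using this.symm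
    obtain ⟨x, hx⟩ := BSAux.mem_range_of_comm hA1 hB1 h1'
    have h2' : (t * BSAux.ψ hn hm z * t⁻¹) * of (ofAdd 1) =
        of (ofAdd 1) * (t * BSAux.ψ hn hm z * t⁻¹) := by
      have h3 := congrArg (BSAux.ψ hn hm) hzc
      simp only [map_mul, map_inv, BSAux.ψ_a, BSAux.ψ_b] at h3
      have h4 := congrArg (fun w => t * w * t⁻¹) h3.symm
      simpa [mul_assoc] using h4
    have hrange2 := BSAux.mem_range_of_comm hA1 hB1 h2'
    have hdvd : n ∣ toAdd x := by
      by_contra hnd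
      refine BSAux.not_mem_range_conj (A := BSAux.Agrp n) (B := BSAux.Agrp m)
        (φ := BSAux.φiso hn hm) (g := x) (fun hmem => hnd ?_) ?_
      · rw [show x = ofAdd (toAdd x) from rfl] at hmem
        exact BSAux.ofAdd_mem_Agrp_iff.1 hmem
      · rw [hx]
        exact hrange2
    obtain ⟨k, hk⟩ := hdvd
    have hψ : BSAux.ψ hn hm z = BSAux.ψ hn hm (BS.a n m ^ (n * k)) := by
      rw [map_zpow, BSAux.ψ_a, BSAux.of_ofAdd_zpow hn hm, ← hk, ← hx]
      rfl
    have hz' : z = BS.a n m ^ (n * k) := by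
      have := congrArg (BSAux.χ hn hm) hψ
      rwa [BSAux.χψ, BSAux.χψ] at this
    exact ⟨k, by show (BS.a n m ^ n) ^ k = z; rw [← zpow_mul, ← hz']⟩
  · intro hzmem
    obtain ⟨k, hk⟩ := hzmem
    rw [Subgroup.mem_centralizer_iff]
    intro x hx
    have hx' : x ∈ Subgroup.closure
        ({BS.a n m, (BS.b n m)⁻¹ * BS.a n m * BS.b n m} : Set (BS n m)) := hx
    have hzk : z = BS.a n m ^ (n * k) := by
      rw [show z = (BS.a n m ^ n) ^ k from hk.symm, zpow_mul]
    clear hx hk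
    induction hx' using Subgroup.closure_induction with
    | mem w hw =>
      rcases hw with hw | hw
      · subst hw
        rw [hzk, zpow_mul]
        exact (((Commute.refl (BS.a n m)).zpow_right n).zpow_right k).eq
      · subst hw
        rw [hzk, zpow_mul]
        have hval : BS.a n m ^ (n * k) = (BS.b n m)⁻¹ * BS.a n m ^ (m * k) * BS.b n m := by
          rw [← BSAux.BS_rel_pow n m k]
          group
        rw [← zpow_mul, hval]
        have hcomm : BS.a n m * BS.a n m ^ (m * k) = BS.a n m ^ (m * k) * BS.a n m :=
          ((Commute.refl (BS.a n m)).zpow_right (m * k)).eq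
        calc (BS.b n m)⁻¹ * BS.a n m * BS.b n m *
              ((BS.b n m)⁻¹ * BS.a n m ^ (m * k) * BS.b n m)
            = (BS.b n m)⁻¹ * (BS.a n m * BS.a n m ^ (m * k)) * BS.b n m := by group
          _ = (BS.b n m)⁻¹ * (BS.a n m ^ (m * k) * BS.a n m) * BS.b n m := by rw [hcomm]
          _ = (BS.b n m)⁻¹ * BS.a n m ^ (m * k) * BS.b n m *
              ((BS.b n m)⁻¹ * BS.a n m * BS.b n m) := by group
    | one => exact Commute.one_left z
    | mul u v hu hv hu' hv' => exact Commute.mul_left hu' hv'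
    | inv u hu hu' => exact Commute.inv_left hu'
end

section
/- Let n, m be integers with 2 ≤ n < |m|. Let P be the amalgamated free product of two copies of ℤ over a copy of ℤ embedded into the first free factor as k ↦ n·k and into the second free factor as k ↦ m·k (in Lean, the pushout Monoid.PushoutI of the two injective homomorphisms ℤ → ℤ given by multiplication by n and by m). Then the group homomorphism P → BS(n,m) determined by sending the generator of the first free factor to a and the generator of the second free factor to b⁻¹ab is injective. -/
/-- The amalgamated free product of two copies of `ℤ` over `ℤ`, embedded into the first
free factor by `k ↦ n·k` and into the second by `k ↦ m·k`, realized as `Monoid.PushoutI`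
of the two corresponding homomorphisms `ℤ → ℤ` (written multiplicatively). -/
abbrev AmalgZZ (n m : ℤ) :=
  Monoid.PushoutI (fun i : Bool =>
    AddMonoidHom.toMultiplicative (zmultiplesHom ℤ (if i then m else n)))

open Multiplicative HNNExtension

namespace BSaux

abbrev MZ := Multiplicative ℤ

/-- The subgroup `⟨ofAdd k⟩` of `Multiplicative ℤ`. -/
def Ak (k : ℤ) : Subgroup MZ := Subgroup.zpowers (ofAdd k)

def genA (k : ℤ) : Ak k := ⟨ofAdd k, Subgroup.mem_zpowers _⟩

def fA (k : ℤ) : MZ →* Ak k := zpowersHom _ (genA k)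

lemma fA_bijective {k : ℤ} (hk : k ≠ 0) : Function.Bijective (fA k) := by
  constructor
  · intro x y hxy
    have h0 : (genA k : MZ) ^ (toAdd x) = (genA k : MZ) ^ (toAdd y) := by
      have := congrArg (Subtype.val) hxy
      simpa [fA, zpowersHom_apply] using this
    have h2 : toAdd x • k = toAdd y • k := by
      have := congrArg toAdd h0
      simpa [genA, toAdd_zpow] using this
    rw [smul_eq_mul, smul_eq_mul] at h2
    exact toAdd.injective (mul_right_cancel₀ hk h2)
  · rintro ⟨x, hx⟩
    rcases Subgroup.mem_zpowers_iff.1 hx with ⟨j, hj⟩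
    exact ⟨ofAdd j, Subtype.ext (by simpa [fA, zpowersHom_apply, genA] using hj)⟩

/-- The isomorphism `⟨ofAdd n⟩ ≃* ⟨ofAdd m⟩` sending `ofAdd (n*k)` to `ofAdd (m*k)`. -/
noncomputable def φe {n m : ℤ} (hn : n ≠ 0) (hm : m ≠ 0) : Ak n ≃* Ak m :=
  (MulEquiv.ofBijective _ (fA_bijective hn)).symm.trans
    (MulEquiv.ofBijective _ (fA_bijective hm))

lemma φe_genA {n m : ℤ} (hn : n ≠ 0) (hm : m ≠ 0) : φe hn hm (genA n) = genA m := by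
  have h1 : (MulEquiv.ofBijective _ (fA_bijective hn)).symm (genA n) = ofAdd 1 := by
    rw [MulEquiv.symm_apply_eq]
    exact Subtype.ext (by simp [MulEquiv.ofBijective, fA, zpowersHom_apply])
  rw [φe, MulEquiv.trans_apply, h1]
  exact Subtype.ext (by simp [MulEquiv.ofBijective, fA, zpowersHom_apply])

/-- The HNN extension of `ℤ` along the isomorphism `nℤ ≃ mℤ`. -/
abbrev HNNBS {n m : ℤ} (hn : n ≠ 0) (hm : m ≠ 0) : Type :=
  HNNExtension MZ (Ak n) (Ak m) (φe hn hm)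

lemma ofAdd_one_zpow (k : ℤ) : (ofAdd (1:ℤ)) ^ k = ofAdd k := by
  rw [← ofAdd_zsmul]; simp

lemma θrel {n m : ℤ} (hn : n ≠ 0) (hm : m ≠ 0) :
    ∀ r ∈ BSRels n m,
      FreeGroup.lift (fun i : Bool =>
        if i then (t : HNNBS hn hm) else of (ofAdd (1:ℤ))) r = 1 := by
  intro r hr
  rcases hr with rfl
  have hconj : (of (ofAdd m) : HNNBS hn hm) = t * of (ofAdd n) * t⁻¹ := by
    have := equiv_eq_conj (φ := φe hn hm) (genA n)
    rwa [φe_genA] at this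
  simp only [map_mul, map_zpow, map_inv, FreeGroup.lift_apply_of, if_pos, if_neg, Bool.false_eq_true,
    not_false_iff, if_true, if_false]
  rw [← map_zpow, ofAdd_one_zpow, ← map_zpow, ofAdd_one_zpow, ← hconj, ← map_mul]
  simp

/-- The canonical map from `BS(n,m)` to the HNN extension, sending `a ↦ of 1` and `b ↦ t`. -/
noncomputable def θ {n m : ℤ} (hn : n ≠ 0) (hm : m ≠ 0) : BS n m →* HNNBS hn hm :=
  PresentedGroup.toGroup (θrel hn hm)

lemma θ_a {n m : ℤ} (hn : n ≠ 0) (hm : m ≠ 0) : θ hn hm (BS.a n m) = of (ofAdd (1:ℤ)) :=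
  PresentedGroup.toGroup.of _

lemma θ_b {n m : ℤ} (hn : n ≠ 0) (hm : m ≠ 0) : θ hn hm (BS.b n m) = t :=
  PresentedGroup.toGroup.of _

lemma range_toMult (k : ℤ) :
    (AddMonoidHom.toMultiplicative (zmultiplesHom ℤ k)).range = Ak k := by
  ext x
  constructor
  · rintro ⟨y, rfl⟩
    exact ⟨toAdd y, by show ofAdd k ^ toAdd y = _; rw [← ofAdd_zsmul]; rfl⟩
  · rintro ⟨j, rfl⟩
    exact ⟨ofAdd j, by show _ = ofAdd k ^ j; rw [← ofAdd_zsmul]; rfl⟩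

lemma mult_injective {k : ℤ} (hk : k ≠ 0) :
    Function.Injective (AddMonoidHom.toMultiplicative (zmultiplesHom ℤ k)) := by
  intro a b hab
  have h := congrArg toAdd hab
  simp only [AddMonoidHom.toMultiplicative_apply_apply, zmultiplesHom_apply, toAdd_ofAdd,
    smul_eq_mul] at h
  exact toAdd.injective (mul_right_cancel₀ hk h)

lemma eq_one_of_mem_set_range {G : Type*} [Group G] {S : Subgroup G} {T : Set G}
    (hc : Subgroup.IsComplement (S : Set G) T) (h1 : (1 : G) ∈ T) {g : G}
    (hgS : g ∈ S) (hgT : g ∈ T) : g = 1 := by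
  have h := hc.1 (a₁ := (⟨⟨g, hgS⟩, ⟨1, h1⟩⟩ : ↥(S : Set G) × ↥T))
    (a₂ := (⟨⟨1, S.one_mem⟩, ⟨g, hgT⟩⟩ : ↥(S : Set G) × ↥T)) (by simp)
  have := congrArg (fun p : ↥(S : Set G) × ↥T => (p.2 : G)) h
  simpa using this.symm

/-- Translation of a word in the amalgam into the letters of a reduced HNN word. -/
def hnnL : List ((_ : Bool) × MZ) → List (ℤˣ × MZ)
  | [] => []
  | ⟨false, c⟩ :: r => (1, c) :: hnnL r
  | ⟨true, g⟩ :: ⟨false, c⟩ :: r => (-1, g) :: (1, c) :: hnnL r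
  | ⟨true, g⟩ :: ⟨true, g'⟩ :: r => (-1, g) :: (1, 1) :: hnnL (⟨true, g'⟩ :: r)
  | [⟨true, g⟩] => [(-1, g), (1, 1)]

lemma hnnL_cons_ne_nil (p : (_ : Bool) × MZ) (r : List ((_ : Bool) × MZ)) :
    hnnL (p :: r) ≠ [] := by
  rcases p with ⟨(_ | _), g⟩ <;>
    rcases r with _ | ⟨⟨(_ | _), c⟩, r⟩ <;> simp [hnnL]

lemma prodEq {n m : ℤ} (hn : n ≠ 0) (hm : m ≠ 0) (χ : AmalgZZ n m →* HNNBS hn hm)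
    (hcf : ∀ x : MZ, χ (Monoid.PushoutI.of false x) = of x)
    (hct : ∀ x : MZ, χ (Monoid.PushoutI.of true x) = t⁻¹ * of x * t) :
    ∀ l : List ((_ : Bool) × MZ), l.Chain' (fun p q => p.1 ≠ q.1) →
      (∀ p ∈ l.head?, p.1 = true) →
      ((hnnL l).map (fun x => t ^ (x.1 : ℤ) * of x.2)).prod
        = (l.map (fun p => χ (Monoid.PushoutI.of p.1 p.2))).prod := by
  intro l
  induction l using hnnL.induct with
  | case1 => simp [hnnL]
  | case2 c r ih =>
    intro _ hst
    exact absurd (hst _ rfl) (by simp)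
  | case3 g c r ih =>
    intro hch hst
    have hch' := List.isChain_cons_cons.1 hch
    have hch'' := List.isChain_cons.1 hch'.2
    have hstr : ∀ p ∈ r.head?, p.1 = true := by
      intro p hp
      have := hch''.1 p hp
      simp only at this
      cases hb : p.1
      · exact absurd hb.symm this
      · rfl
    rw [hnnL]
    simp only [List.map_cons, List.prod_cons]
    rw [ih hch''.2 hstr, hcf, hct]
    simp [mul_assoc]
  | case4 g g' r ih =>
    intro hch _
    exact absurd (List.isChain_cons_cons.1 hch).1 (by simp)
  | case5 g =>
    intro _ _
    rw [hnnL]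
    simp only [List.map_cons, List.prod_cons, List.map_nil, List.prod_nil]
    rw [hct]
    simp [mul_assoc]

lemma chainL {n m : ℤ} :
    ∀ l : List ((_ : Bool) × MZ), l.Chain' (fun p q => p.1 ≠ q.1) →
      (∀ p ∈ l, p.2 ∉ Ak (if p.1 then m else n)) →
      (∀ p ∈ l.head?, p.1 = true) →
      (hnnL l).Chain' (fun a b => a.2 ∈ toSubgroup (Ak n) (Ak m) a.1 → a.1 = b.1) := by
  intro l
  induction l using hnnL.induct with
  | case1 => simp [hnnL, List.Chain', List.isChain_nil]
  | case2 c r ih =>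
    intro _ _ hst
    exact absurd (hst _ rfl) (by simp)
  | case3 g c r ih =>
    intro hch hred hst
    have hch' := List.isChain_cons_cons.1 hch
    have hch'' := List.isChain_cons.1 hch'.2
    have hstr : ∀ p ∈ r.head?, p.1 = true := by
      intro p hp
      have := hch''.1 p hp
      simp only at this
      cases hb : p.1
      · exact absurd hb.symm this
      · rfl
    have hgm : g ∉ Ak m := by simpa using hred ⟨true, g⟩ (List.mem_cons_self)
    have hcn : c ∉ Ak n := by
      simpa using hred ⟨false, c⟩ (List.mem_cons_of_mem _ (List.mem_cons_self))
    rw [hnnL, List.Chain', List.isChain_cons_cons, List.isChain_cons]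
    refine ⟨fun hmem => absurd hmem hgm, fun y hy hmem => absurd hmem hcn, ?_⟩
    exact ih hch''.2 (fun p hp => hred p (by simp [hp])) hstr
  | case4 g g' r ih =>
    intro hch _ _
    exact absurd (List.isChain_cons_cons.1 hch).1 (by simp)
  | case5 g =>
    intro _ hred _
    have hgm : g ∉ Ak m := by simpa using hred ⟨true, g⟩ (List.mem_cons_self)
    rw [hnnL, List.Chain', List.isChain_cons_cons]
    exact ⟨fun hmem => absurd hmem hgm, List.isChain_singleton _⟩

end BSaux

/-- For `2 ≤ n < |m|`, the group homomorphism from the amalgamated free product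
`ℤ *_{ℤ} ℤ` (with embeddings `k ↦ nk` and `k ↦ mk`) to `BS(n,m)` determined by sending the
generator of the first free factor to `a` and the generator of the second free factor to
`b⁻¹ a b` is injective. -/
theorem BS_amalgam_injective (n m : ℤ) (h1 : 2 ≤ n) (h2 : n < |m|)
    (ψ : AmalgZZ n m →* BS n m)
    (hψa : ψ (Monoid.PushoutI.of false (Multiplicative.ofAdd (1 : ℤ))) = BS.a n m)
    (hψb : ψ (Monoid.PushoutI.of true (Multiplicative.ofAdd (1 : ℤ))) =
      (BS.b n m)⁻¹ * BS.a n m * BS.b n m) :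
    Function.Injective ψ := by
  classical
  have hn : n ≠ 0 := by omega
  have hm : m ≠ 0 := by
    rintro rfl
    simp only [abs_zero] at h2
    omega
  let Φ : ∀ _ : Bool, BSaux.MZ →* BSaux.MZ := fun i =>
    AddMonoidHom.toMultiplicative (zmultiplesHom ℤ (if i then m else n))
  have hφinj : ∀ i, Function.Injective (Φ i) := by
    intro i
    cases i
    · exact BSaux.mult_injective hn
    · exact BSaux.mult_injective hm
  obtain ⟨d⟩ := Monoid.PushoutI.NormalWord.transversal_nonempty Φ hφinj
  rw [injective_iff_map_eq_one]
  intro x hx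
  set χ : AmalgZZ n m →* BSaux.HNNBS hn hm := (BSaux.θ hn hm).comp ψ with hχdef
  have hχx : χ x = 1 := by rw [hχdef, MonoidHom.comp_apply, hx, map_one]
  have hcf : ∀ y : BSaux.MZ, χ (Monoid.PushoutI.of (φ := Φ) false y) = of y := by
    have h1 : χ.comp (Monoid.PushoutI.of (φ := Φ) false) = of :=
      MonoidHom.ext_mint (by
        show χ (Monoid.PushoutI.of (φ := Φ) false (Multiplicative.ofAdd (1:ℤ))) = _
        rw [hχdef, MonoidHom.comp_apply, hψa, BSaux.θ_a])
    intro y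
    exact DFunLike.congr_fun h1 y
  have hct : ∀ y : BSaux.MZ, χ (Monoid.PushoutI.of (φ := Φ) true y) = t⁻¹ * of y * t := by
    have h1 : χ.comp (Monoid.PushoutI.of (φ := Φ) true) =
        ((MulAut.conj (t⁻¹ : BSaux.HNNBS hn hm)).toMonoidHom).comp of :=
      MonoidHom.ext_mint (by
        show χ (Monoid.PushoutI.of (φ := Φ) true (Multiplicative.ofAdd (1:ℤ))) = _
        rw [hχdef, MonoidHom.comp_apply, hψb]
        simp only [map_mul, map_inv, BSaux.θ_a, BSaux.θ_b]
        simp [MulAut.conj_apply, mul_assoc])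
    intro y
    have := DFunLike.congr_fun h1 y
    simpa [MulAut.conj_apply, mul_assoc] using this
  set w := (Monoid.PushoutI.NormalWord.equiv (φ := Φ) (d := d)) x with hwdef
  have hxw : w.prod = x := (Monoid.PushoutI.NormalWord.equiv (φ := Φ) (d := d)).symm_apply_apply x
  have hred : ∀ p ∈ w.toList, p.2 ∉ BSaux.Ak (if p.1 then m else n) := by
    intro p hp hpA
    have hset : p.2 ∈ d.set p.1 := w.normalized p.1 p.2 (by cases p; exact hp)
    have hone : p.2 ≠ 1 := w.ne_one p hp
    have hrange : p.2 ∈ (Φ p.1).range := by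
      show p.2 ∈ (AddMonoidHom.toMultiplicative
        (zmultiplesHom ℤ (if p.1 then m else n))).range
      rw [BSaux.range_toMult]
      exact hpA
    exact hone (BSaux.eq_one_of_mem_set_range (d.compl p.1) (d.one_mem p.1) hrange hset)
  have hchain : w.toList.Chain' (fun p q => p.1 ≠ q.1) := w.chain_ne
  have hbase : ∀ h : BSaux.MZ, χ (Monoid.PushoutI.base Φ h) = of (Φ false h) := by
    intro h
    rw [← Monoid.PushoutI.of_apply_eq_base Φ false h, hcf]
  have hxval : χ x = of (Φ false w.head) *
      (w.toList.map (fun p => χ (Monoid.PushoutI.of (φ := Φ) p.1 p.2))).prod := by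
    conv_lhs => rw [← hxw]
    rw [show w.prod = Monoid.PushoutI.base Φ w.head *
        Monoid.PushoutI.ofCoprodI w.toWord.prod from rfl]
    rw [map_mul, hbase]
    congr 1
    calc χ (Monoid.PushoutI.ofCoprodI w.toWord.prod)
        = (χ.comp Monoid.PushoutI.ofCoprodI)
            (List.prod (w.toList.map fun l : (_ : Bool) × BSaux.MZ => Monoid.CoprodI.of (M := fun _ : Bool => BSaux.MZ) (i := l.fst) l.snd)) := rfl
      _ = ((w.toList.map fun l : (_ : Bool) × BSaux.MZ => Monoid.CoprodI.of (M := fun _ : Bool => BSaux.MZ) (i := l.fst) l.snd).map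
            (χ.comp Monoid.PushoutI.ofCoprodI)).prod := map_list_prod _ _
      _ = _ := by
            rw [List.map_map]
            refine congrArg List.prod (List.map_congr_left fun p _ => ?_)
            simp [Function.comp, Monoid.PushoutI.ofCoprodI_of]
  rcases hlist : w.toList with _ | ⟨⟨i, g0⟩, r⟩
  · -- empty word : `x` is in the base group
    rw [hlist] at hxval
    simp only [List.map_nil, List.prod_nil, mul_one] at hxval
    have h01 : Φ false w.head = 1 :=
      HNNExtension.of_injective (φ := BSaux.φe hn hm) (by rw [← hxval, hχx, map_one])
    have hw1 : w.head = 1 := hφinj false (by rw [h01, map_one])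
    rw [← hxw, show w.prod = Monoid.PushoutI.base Φ w.head *
        Monoid.PushoutI.ofCoprodI w.toWord.prod from rfl, hw1]
    have hp1 : w.toWord.prod = 1 := by
      rw [show w.toWord.prod
          = List.prod (w.toList.map fun l : (_ : Bool) × BSaux.MZ => Monoid.CoprodI.of (M := fun _ : Bool => BSaux.MZ) (i := l.fst) l.snd) from rfl, hlist]
      simp
    rw [hp1]
    simp
  · rw [hlist] at hxval hchain hred
    cases i
    · -- first letter in the first factor
      have hst_r : ∀ p ∈ r.head?, p.1 = true := by
        intro p hp
        have := (List.isChain_cons.1 hchain).1 p hp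
        simp only at this
        cases hb : p.1
        · exact absurd hb.symm this
        · rfl
      have hchr : r.Chain' (fun p q => p.1 ≠ q.1) := (List.isChain_cons.1 hchain).2
      have hredr : ∀ p ∈ r, p.2 ∉ BSaux.Ak (if p.1 then m else n) :=
        fun p hp => hred p (List.mem_cons_of_mem _ hp)
      let RW : HNNExtension.NormalWord.ReducedWord BSaux.MZ (BSaux.Ak n) (BSaux.Ak m) :=
        { head := Φ false w.head * g0
          toList := BSaux.hnnL r
          chain := BSaux.chainL r hchr hredr hst_r }
      have hprod : RW.prod (BSaux.φe hn hm) = χ x := by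
        rw [show RW.prod (BSaux.φe hn hm) = of RW.head *
            ((BSaux.hnnL r).map (fun p => t ^ (p.1 : ℤ) * of p.2)).prod from rfl]
        rw [BSaux.prodEq hn hm χ hcf hct r hchr hst_r, hxval]
        simp only [List.map_cons, List.prod_cons, hcf]
        rw [map_mul, mul_assoc]
      have hnil : BSaux.hnnL r = [] :=
        HNNExtension.ReducedWord.toList_eq_nil_of_mem_of_range _ RW
          (by rw [hprod, hχx]; exact Subgroup.one_mem _)
      rcases r with _ | ⟨q, r'⟩
      · -- the whole word is a single letter in the first factor
        simp only [BSaux.hnnL, List.map_nil, List.prod_nil, mul_one,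
          List.map_cons, List.prod_cons, hcf] at hxval
        have h01 : Φ false w.head * g0 = 1 :=
          HNNExtension.of_injective (φ := BSaux.φe hn hm)
            (by rw [map_mul, ← hxval, hχx, map_one])
        have hg0 : g0 ∈ BSaux.Ak n := by
          have h2 : g0 = (Φ false w.head)⁻¹ :=
            eq_inv_iff_mul_eq_one.2 (by rw [mul_comm]; exact h01)
          rw [← BSaux.range_toMult n]
          exact ⟨w.head⁻¹, (map_inv (Φ false) w.head).trans h2.symm⟩
        have := hred ⟨false, g0⟩ (List.mem_cons_self)
        simp only [Bool.false_eq_true, if_false] at this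
        exact absurd hg0 this
      · exact absurd hnil (BSaux.hnnL_cons_ne_nil _ _)
    · -- first letter in the second factor
      let RW : HNNExtension.NormalWord.ReducedWord BSaux.MZ (BSaux.Ak n) (BSaux.Ak m) :=
        { head := Φ false w.head
          toList := BSaux.hnnL (⟨true, g0⟩ :: r)
          chain := BSaux.chainL _ hchain hred (by simp) }
      have hprod : RW.prod (BSaux.φe hn hm) = χ x := by
        rw [show RW.prod (BSaux.φe hn hm) = of RW.head *
            ((BSaux.hnnL (⟨true, g0⟩ :: r)).map
              (fun p => t ^ (p.1 : ℤ) * of p.2)).prod from rfl]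
        rw [BSaux.prodEq hn hm χ hcf hct _ hchain (by simp), hxval]
      have hnil : BSaux.hnnL (⟨true, g0⟩ :: r) = [] :=
        HNNExtension.ReducedWord.toList_eq_nil_of_mem_of_range _ RW
          (by rw [hprod, hχx]; exact Subgroup.one_mem _)
      exact absurd hnil (BSaux.hnnL_cons_ne_nil _ _)
end

section
/- Let n, m be integers with 2 ≤ n < |m| and let μ be the normalized Haar probability measure on 𝕋. Let E ⊆ 𝕋 be a Borel set such that for every natural number k and every ζ ∈ 𝕋 with ζ^{((n·m)^k)} = 1, the translated set ζ·E agrees with E up to a μ-null set (μ(E Δ ζ·E) = 0). Then μ(E) = 0 or μ(E) = 1. -/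
open MeasureTheory

noncomputable instance : MeasurableSpace Circle := borel Circle
instance : BorelSpace Circle := ⟨rfl⟩

open Complex Real Filter Topology
open scoped BoundedContinuousFunction

lemma circle_exp_npow (a : ℝ) (p : ℕ) : Circle.exp a ^ p = Circle.exp (p * a) := by
  induction p with
  | zero => simp
  | succ p ih =>
    rw [pow_succ, ih, ← Circle.exp_add]
    congr 1
    push_cast
    ring

lemma dense_roots (N : ℕ) (hN : 2 ≤ N) :
    Dense {z : Circle | ∃ k : ℕ, z ^ (N ^ k) = 1} := by
  rw [Metric.dense_iff]
  intro x r hr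
  obtain ⟨k, hk⟩ := pow_unbounded_of_one_lt (R := ℝ) (2 * π * (1 + 1 / r) + 4)
    (by exact_mod_cast hN : (1 : ℝ) < N)
  set T : ℕ := N ^ k with hT
  have hTR : (2 * π * (1 + 1 / r) + 4 : ℝ) < T := by
    rw [hT]; push_cast; exact hk
  have hπ : (0 : ℝ) < π := Real.pi_pos
  have hTpos : (0 : ℝ) < T := by nlinarith [div_pos (by norm_num : (0:ℝ) < 1) hr]
  have hTne : (T : ℝ) ≠ 0 := ne_of_gt hTpos
  set θ : ℝ := Complex.arg x with hθ
  set j : ℤ := round (θ * T / (2 * π)) with hj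
  set φ : ℝ := 2 * π * j / T with hφ
  set ζ : Circle := Circle.exp φ with hζ
  have hζ_mem : ζ ^ (N ^ k) = 1 := by
    rw [hζ, circle_exp_npow, hφ]
    have : (T : ℝ) * (2 * π * j / T) = 2 * π * (j : ℝ) := by field_simp
    rw [← hT, this]
    exact Circle.exp_two_pi_mul_int j
  -- distance estimate
  have hround : |θ * T / (2 * π) - j| ≤ 1 / 2 := abs_sub_round _
  have hdiff : |θ - φ| ≤ π / T := by
    have heq : θ - φ = (2 * π / T) * (θ * T / (2 * π) - j) := by
      rw [hφ]; field_simp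
    rw [heq, abs_mul]
    have h1 : |2 * π / T| = 2 * π / T := abs_of_pos (by positivity)
    rw [h1]
    calc 2 * π / T * |θ * T / (2 * π) - j| ≤ 2 * π / T * (1 / 2) := by
          apply mul_le_mul_of_nonneg_left hround (by positivity)
      _ = π / T := by ring
  have hTbig : (4 : ℝ) ≤ T := by nlinarith [div_pos (by norm_num : (0:ℝ) < 1) hr]
  have hπT : π / T ≤ 1 := by
    rw [div_le_one hTpos]; nlinarith [Real.pi_lt_d2]
  have hdist : dist x ζ < r := by
    have hx : x = Circle.exp θ := (Circle.exp_arg x).symm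
    have : dist x ζ = ‖Complex.exp (θ * Complex.I) - Complex.exp (φ * Complex.I)‖ := by
      rw [hx, hζ, ← Complex.dist_eq]
      rfl
    rw [this]
    have factor : Complex.exp (θ * Complex.I) - Complex.exp (φ * Complex.I)
        = Complex.exp (φ * Complex.I) * (Complex.exp ((θ - φ : ℝ) * Complex.I) - 1) := by
      rw [mul_sub, mul_one, ← Complex.exp_add]
      congr 2
      push_cast
      ring
    rw [factor, norm_mul, Complex.norm_exp_ofReal_mul_I, one_mul]
    have habs : ‖((θ - φ : ℝ) : ℂ) * Complex.I‖ = |θ - φ| := by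
      rw [norm_mul, Complex.norm_I, Complex.norm_real, mul_one, Real.norm_eq_abs]
    have hle1 : ‖((θ - φ : ℝ) : ℂ) * Complex.I‖ ≤ 1 := by
      rw [habs]; exact hdiff.trans hπT
    calc ‖Complex.exp ((θ - φ : ℝ) * Complex.I) - 1‖
        ≤ 2 * ‖((θ - φ : ℝ) : ℂ) * Complex.I‖ := Complex.norm_exp_sub_one_le hle1
      _ = 2 * |θ - φ| := by rw [habs]
      _ ≤ 2 * (π / T) := by linarith
      _ = 2 * π / T := by ring
      _ < r := by
          rw [div_lt_iff₀ hTpos]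
          have h1r : 0 < 1 / r := by positivity
          have hr1 : r * (1 / r) = 1 := by field_simp
          nlinarith
  exact ⟨ζ, Metric.mem_ball'.mpr hdist, k, hζ_mem⟩

/-- For `2 ≤ n < |m|` and `μ` the normalized Haar probability measure on `𝕋`: if a Borel
set `E ⊆ 𝕋` is, up to `μ`-null sets, invariant under rotation by every `(nm)^k`-th root of
unity (`k ∈ ℕ`), then `μ(E) = 0` or `μ(E) = 1`. -/
theorem rotations_ergodic (n m : ℤ) (h1 : 2 ≤ n) (h2 : n < |m|)
    (μ : Measure Circle) [μ.IsHaarMeasure] [IsProbabilityMeasure μ]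
    (E : Set Circle) (hE : MeasurableSet E)
    (hinv : ∀ (k : ℕ) (ζ : Circle), ζ ^ ((n * m) ^ k) = 1 →
      μ (symmDiff E ((fun y => ζ * y) '' E)) = 0) :
    μ E = 0 ∨ μ E = 1 := by
  classical
  set N : ℕ := (n * m).natAbs with hN
  have hN2 : 2 ≤ N := by
    have hm : (1 : ℤ) ≤ |m| := by linarith
    have : (2 : ℤ) ≤ |n * m| := by
      rw [abs_mul]
      calc (2 : ℤ) = 2 * 1 := by ring
        _ ≤ |n| * |m| := by
            apply mul_le_mul _ hm (by norm_num) (abs_nonneg n)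
            rw [abs_of_nonneg (by linarith : (0:ℤ) ≤ n)]; exact h1
    have h' : (2 : ℤ) ≤ (N : ℤ) := by rwa [Int.abs_eq_natAbs, ← hN] at this
    exact_mod_cast h'
  set ν : Measure Circle := μ.restrict E with hν
  -- invariance of ν under roots of unity
  have key : ∀ ζ : Circle, (∃ k : ℕ, ζ ^ (N ^ k) = 1) →
      Measure.map (fun y => ζ * y) ν = ν := by
    rintro ζ ⟨k, hz⟩
    have hz' : ζ ^ ((n * m) ^ k) = 1 := by
      have hNk : ((n * m) ^ k).natAbs = N ^ k := by rw [Int.natAbs_pow]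
      rcases Int.natAbs_eq ((n * m) ^ k) with h | h
      · rw [h, hNk, zpow_natCast, hz]
      · rw [h, hNk, zpow_neg, zpow_natCast, hz, inv_one]
    have hEq : E =ᵐ[μ] ((fun y => ζ * y) '' E) :=
      (measure_symmDiff_eq_zero_iff).mp (hinv k ζ hz')
    have hmeas : Measurable (fun y : Circle => ζ * y) := (continuous_mul_left ζ).measurable
    have himg : MeasurableSet ((fun y => ζ * y) '' E) := by
      rw [Set.image_mul_left]
      exact measurable_const_mul ζ⁻¹ hE
    have hpre : (fun y => ζ * y) ⁻¹' ((fun y => ζ * y) '' E) = E :=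
      Set.preimage_image_eq E (mul_right_injective ζ)
    calc Measure.map (fun y => ζ * y) (μ.restrict E)
        = Measure.map (fun y => ζ * y)
            (μ.restrict ((fun y => ζ * y) ⁻¹' ((fun y => ζ * y) '' E))) := by rw [hpre]
      _ = (Measure.map (fun y => ζ * y) μ).restrict ((fun y => ζ * y) '' E) :=
          (Measure.restrict_map hmeas himg).symm
      _ = μ.restrict ((fun y => ζ * y) '' E) := by
          rw [MeasureTheory.map_mul_left_eq_self μ ζ]
      _ = μ.restrict E := (Measure.restrict_congr_set hEq.symm)
  -- continuity of translates of lintegrals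
  have hcont : ∀ f : Circle →ᵇ NNReal,
      Continuous (fun g : Circle => ∫⁻ x, (f (g * x) : ENNReal) ∂ν) := by
    intro f
    rw [continuous_iff_seqContinuous]
    intro u g hu
    apply tendsto_lintegral_of_dominated_convergence (fun _ => ((nndist 0 f : NNReal) : ENNReal))
    · intro p
      exact (ENNReal.continuous_coe.comp
        (f.continuous.comp (continuous_mul_left (u p)))).measurable
    · intro p
      filter_upwards with x
      exact ENNReal.coe_le_coe.mpr (f.apply_le_nndist_zero (u p * x))
    · rw [lintegral_const]
      exact (ENNReal.mul_lt_top ENNReal.coe_lt_top (measure_lt_top ν Set.univ)).ne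
    · filter_upwards with x
      have hmul : Tendsto (fun p => u p * x) atTop (𝓝 (g * x)) :=
        (hu.mul_const x)
      exact ((ENNReal.continuous_coe.comp f.continuous).tendsto (g * x)).comp hmul
  -- full invariance
  have inv : ∀ g : Circle, Measure.map (fun y => g * y) ν = ν := by
    intro g
    have hfin : IsFiniteMeasure ν := by
      rw [hν]; infer_instance
    symm
    apply ext_of_forall_lintegral_eq_of_IsFiniteMeasure
    intro f
    have hmeasf : Measurable fun x : Circle => (f x : ENNReal) :=
      (ENNReal.continuous_coe.comp f.continuous).measurable
    rw [lintegral_map hmeasf (continuous_mul_left g).measurable]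
    have hEqOn : Set.EqOn (fun g : Circle => ∫⁻ x, (f (g * x) : ENNReal) ∂ν)
        (fun _ => ∫⁻ x, (f x : ENNReal) ∂ν) {z : Circle | ∃ k : ℕ, z ^ (N ^ k) = 1} := by
      intro ζ hζ
      simp only
      rw [← lintegral_map hmeasf (continuous_mul_left ζ).measurable, key ζ hζ]
    have := Continuous.ext_on (dense_roots N hN2) (hcont f) continuous_const hEqOn
    exact (congrFun this g).symm
  haveI : ν.IsMulLeftInvariant := ⟨inv⟩
  haveI : IsFiniteMeasure ν := by rw [hν]; infer_instance
  have huniq := Measure.isMulInvariant_eq_smul_of_compactSpace ν μ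
  set c : NNReal := Measure.haarScalarFactor ν μ with hc
  have huniv : ν Set.univ = (c : ENNReal) := by
    rw [huniq]
    rw [Measure.smul_apply, measure_univ, ENNReal.smul_def, smul_eq_mul, mul_one]
  have hcE : (c : ENNReal) = μ E := by
    rw [← huniv, hν, Measure.restrict_apply_univ]
  have hEE : ν E = (c : ENNReal) * μ E := by
    rw [huniq]; rw [Measure.smul_apply, ENNReal.smul_def, smul_eq_mul]
  have hνE : ν E = μ E := by rw [hν, Measure.restrict_apply hE, Set.inter_self]
  have hsq : μ E * μ E = μ E := by
    calc μ E * μ E = (c : ENNReal) * μ E := by rw [hcE]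
      _ = ν E := hEE.symm
      _ = μ E := hνE
  rcases eq_or_ne (μ E) 0 with h0 | h0
  · exact Or.inl h0
  · right
    have hne : μ E ≠ ⊤ := (measure_lt_top μ E).ne
    exact (ENNReal.mul_eq_left h0 hne).mp hsq
end

section
/- Let n, m be integers with 2 ≤ n < |m| and let μ be the normalized Haar probability measure on 𝕋. The equivalence relation R_{n,m} is ergodic: if E ⊆ 𝕋 is a Borel set that is a union of R_{n,m}-classes (i.e. for all y, z ∈ 𝕋 with (y,z) ∈ R_{n,m} one has y ∈ E if and only if z ∈ E), then μ(E) = 0 or μ(E) = 1. -/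
open MeasureTheory

namespace RnmAux

open AddCircle

local instance : Fact ((0:ℝ) < 1) := ⟨one_pos⟩

abbrev T1 := AddCircle (1:ℝ)

noncomputable instance : MeasurableSpace (Multiplicative T1) :=
  (inferInstance : MeasurableSpace T1)
instance : BorelSpace (Multiplicative T1) :=
  ⟨(inferInstance : BorelSpace T1).measurable_eq⟩

/-- `toCircle` as a monoid hom from `Multiplicative (AddCircle 1)`. -/
noncomputable def toCircleHom : Multiplicative T1 →* Circle where
  toFun x := AddCircle.toCircle (Multiplicative.toAdd x)
  map_one' := AddCircle.toCircle_zero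
  map_mul' x y := AddCircle.toCircle_add _ _

lemma toCircle_surjective : Function.Surjective (AddCircle.toCircle : T1 → Circle) := by
  intro z
  obtain ⟨x, hx⟩ := (homeomorphCircle (one_ne_zero : (1:ℝ) ≠ 0)).surjective z
  exact ⟨x, by rw [← homeomorphCircle_apply (one_ne_zero : (1:ℝ) ≠ 0), hx]⟩

lemma map_haar_eq (μ : Measure Circle) [μ.IsHaarMeasure] [IsProbabilityMeasure μ] :
    μ = (haarAddCircle (T := 1)).map (AddCircle.toCircle) := by
  have hcont : Continuous (AddCircle.toCircle : T1 → Circle) := AddCircle.continuous_toCircle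
  have h1 : IsProbabilityMeasure ((haarAddCircle (T := 1)).map (AddCircle.toCircle)) :=
    Measure.isProbabilityMeasure_map hcont.measurable.aemeasurable
  have h2 : ((haarAddCircle (T := 1)).map (AddCircle.toCircle)).IsHaarMeasure := by
    letI ν : Measure (Multiplicative T1) := haarAddCircle (T := 1)
    haveI : IsFiniteMeasure ν := (inferInstance : IsFiniteMeasure (haarAddCircle (T := 1)))
    haveI : ν.IsHaarMeasure :=
      { toIsFiniteMeasureOnCompacts := ⟨fun _K hK => (inferInstance : IsFiniteMeasureOnCompacts
          (haarAddCircle (T := 1))).lt_top_of_isCompact hK⟩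
        toIsMulLeftInvariant := ⟨fun g => (inferInstance : (haarAddCircle (T := 1)).IsAddLeftInvariant
          ).map_add_left_eq_self (Multiplicative.toAdd g)⟩
        toIsOpenPosMeasure := ⟨fun U hU hne => (inferInstance : (haarAddCircle (T := 1)).IsOpenPosMeasure
          ).open_pos U hU hne⟩ }
    have := Measure.isHaarMeasure_map_of_isFiniteMeasure (μ := ν)
      toCircleHom (by exact hcont) (by exact toCircle_surjective)
    exact this
  exact Measure.isHaarMeasure_eq_of_isProbabilityMeasure μ _

lemma lem1 (g : T1 → ℂ) (hg : Measurable g) (n j : ℤ) (hn : n ≠ 0) :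
    fourierCoeff (fun x => g (n • x)) (n * j) = fourierCoeff g j := by
  have hmp : MeasurePreserving (fun x : T1 => n • x) haarAddCircle haarAddCircle :=
    MeasureTheory.Measure.measurePreserving_zsmul _ hn
  have h1 : ∀ x : T1, (fourier (-(n * j))) x = fourier (-j) (n • x) := by
    intro x
    rw [fourier_apply, fourier_apply, smul_smul]
    congr 1
    ring_nf
    rfl
  have h2 := integral_map (μ := haarAddCircle) hmp.measurable.aemeasurable
      (f := fun y => fourier (-j) y • g y)
      (by rw [hmp.map_eq]
          exact ((fourier (-j)).continuous.measurable.smul hg).aestronglyMeasurable)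
  rw [hmp.map_eq] at h2
  simp only [fourierCoeff, h1]
  exact h2.symm

lemma lem2 (g : T1 → ℂ) (n k : ℤ) (hn : n ≠ 0) (hk : ¬ n ∣ k) :
    fourierCoeff (fun x => g (n • x)) k = 0 := by
  set u : T1 := (((n:ℝ)⁻¹ : ℝ) : T1) with hu
  have hnu : n • u = 0 := by
    rw [hu, ← QuotientAddGroup.mk_zsmul]
    rw [show ((n • ((n:ℝ)⁻¹) : ℝ)) = (1:ℝ) by rw [zsmul_eq_mul]; exact mul_inv_cancel₀ (by exact_mod_cast hn)]
    exact AddCircle.coe_period 1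
  have hfu : fourier (-k) u ≠ 1 := by
    intro h
    apply hk
    rw [fourier_apply] at h
    have h2 : ((-k) • u) = 0 := by
      apply injective_toCircle (one_ne_zero : (1:ℝ) ≠ 0)
      rw [AddCircle.toCircle_zero]
      exact Subtype.ext h
    rw [hu, ← QuotientAddGroup.mk_zsmul, AddCircle.coe_eq_zero_iff] at h2
    obtain ⟨z, hz⟩ := h2
    have hn' : (n:ℝ) ≠ 0 := by exact_mod_cast hn
    have hz' : (z:ℝ) * n = -k := by
      rw [zsmul_eq_mul, zsmul_eq_mul, mul_one] at hz
      rw [hz]; push_cast; field_simp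
    have hzn : z * n = -k := by exact_mod_cast hz'
    exact ⟨-z, by linear_combination hzn⟩
  have step : fourierCoeff (fun x => g (n • x)) k
      = fourier (-k) u * fourierCoeff (fun x => g (n • x)) k := by
    conv_lhs => rw [fourierCoeff,
      ← integral_add_right_eq_self (μ := haarAddCircle)
        (fun x : T1 => fourier (-k) x • g (n • x)) u]
    have h3 : ∀ x : T1, fourier (-k) (x + u) • g (n • (x + u))
        = fourier (-k) u * (fourier (-k) x • g (n • x)) := by
      intro x
      rw [fourier_apply, fourier_apply, fourier_apply, smul_add n x u, hnu, add_zero,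
        smul_add (-k) x u, AddCircle.toCircle_add]
      push_cast
      simp only [smul_eq_mul]
      ring
    simp only [h3]
    rw [integral_const_mul]
    rfl
  have h4 : (1 - fourier (-k) u) * fourierCoeff (fun x => g (n • x)) k = 0 := by
    rw [sub_mul, one_mul]; rw [← step]; ring
  rcases mul_eq_zero.mp h4 with h | h
  · exact absurd (by linear_combination -h : fourier (-k) u = 1) hfu
  · exact h

lemma fourierCoeff_const_zero (c : ℂ) : fourierCoeff (fun _ : T1 => c) 0 = c := by
  simp [fourierCoeff, fourier_zero, neg_zero]

lemma fourierCoeff_const_ne (c : ℂ) (k : ℤ) (hk : k ≠ 0) :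
    fourierCoeff (fun _ : T1 => c) k = 0 := by
  have h2k : (2 * k) ≠ 0 := by omega
  have hndvd : ¬ (2 * k ∣ k) := by
    intro hd
    have := Int.natAbs_dvd_natAbs.mpr hd
    have hle := Nat.le_of_dvd (Int.natAbs_pos.mpr hk) this
    have h2' : (2 * k).natAbs = 2 * k.natAbs := by omega
    omega
  exact lem2 (fun _ => c) (2 * k) k h2k hndvd

lemma toCircle_zsmul (k : ℤ) (x : T1) :
    AddCircle.toCircle (k • x) = (AddCircle.toCircle x) ^ k := by
  let φ : T1 →+ Additive Circle :=
    AddMonoidHom.mk' (fun y => Additive.ofMul (AddCircle.toCircle y))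
      (fun a b => congrArg Additive.ofMul (AddCircle.toCircle_add a b))
  have h := map_zsmul φ k x
  have := congrArg Additive.toMul h
  simpa [φ, toMul_zsmul] using this

end RnmAux

/-- The relation `R_{n,m}` on the unit circle `𝕋`: `(y,z) ∈ R_{n,m}` iff there exist
natural numbers `a, b` such that `y^{n^a·m^b} = z^{m^a·n^b}` (integer powers in `𝕋`). -/
def Rnm (n m : ℤ) (y z : Circle) : Prop :=
  ∃ a b : ℕ, y ^ (n ^ a * m ^ b) = z ^ (m ^ a * n ^ b)

/-- For `2 ≤ n < |m|` and `μ` the normalized Haar probability measure on `𝕋`, the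
equivalence relation `R_{n,m}` is ergodic: every Borel set `E ⊆ 𝕋` that is a union of
`R_{n,m}`-classes has measure `0` or `1`. -/
theorem Rnm_ergodic (n m : ℤ) (h1 : 2 ≤ n) (h2 : n < |m|)
    (μ : Measure Circle) [μ.IsHaarMeasure] [IsProbabilityMeasure μ]
    (E : Set Circle) (hE : MeasurableSet E)
    (hsat : ∀ y z : Circle, Rnm n m y z → (y ∈ E ↔ z ∈ E)) :
    μ E = 0 ∨ μ E = 1 := by
  classical
  haveI : Fact ((0:ℝ) < 1) := ⟨one_pos⟩
  open AddCircle RnmAux in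
  -- basic integer facts
  have hn0 : n ≠ 0 := by omega
  have hm0 : m ≠ 0 := by
    intro h; rw [h] at h2; simp at h2; omega
  have hnm : n.natAbs < m.natAbs := by
    have h' : (n:ℤ) < (m.natAbs : ℤ) := by rwa [Int.abs_eq_natAbs] at h2
    have hn' : (n.natAbs : ℤ) = n := Int.natAbs_of_nonneg (by omega)
    omega
  -- transfer the set to `AddCircle 1`
  have hcont : Continuous (AddCircle.toCircle : T1 → Circle) := AddCircle.continuous_toCircle
  set ν : Measure T1 := haarAddCircle (T := 1) with hν
  set A : Set T1 := AddCircle.toCircle ⁻¹' E with hA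
  have hAmeas : MeasurableSet A := hcont.measurable hE
  have hμE : μ E = ν A := by
    rw [map_haar_eq μ, Measure.map_apply hcont.measurable hE]
  -- the indicator function
  set g : T1 → ℂ := A.indicator (fun _ => (1:ℂ)) with hgdef
  have hg : Measurable g := measurable_const.indicator hAmeas
  -- saturation transfers to the key functional equation
  have hRnm : ∀ t : Circle, Rnm n m (t ^ n) (t ^ m) := by
    intro t
    refine ⟨0, 1, ?_⟩
    simp only [pow_zero, pow_one, one_mul, mul_one]
    rw [← zpow_mul, ← zpow_mul, mul_comm]
  have hAx : ∀ x : T1, ((n • x) ∈ A ↔ (m • x) ∈ A) := by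
    intro x
    have := hsat _ _ (hRnm (AddCircle.toCircle x))
    simpa [hA, Set.mem_preimage, RnmAux.toCircle_zsmul] using this
  have hgnm : (fun x : T1 => g (n • x)) = (fun x : T1 => g (m • x)) := by
    funext x
    by_cases hx : (n • x) ∈ A
    · simp [hgdef, Set.indicator_apply, hx, (hAx x).mp hx]
    · have hx2 : (m • x) ∉ A := fun h => hx ((hAx x).mpr h)
      simp [hgdef, Set.indicator_apply, hx, hx2]
  -- all nonzero Fourier coefficients of `g` vanish
  have main : ∀ N : ℕ, ∀ j : ℤ, j.natAbs = N → j ≠ 0 → fourierCoeff g j = 0 := by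
    intro N
    induction N using Nat.strong_induction_on with
    | _ N ih =>
      intro j hjN hj0
      have e1 : fourierCoeff g j = fourierCoeff (fun x => g (m • x)) (n * j) := by
        rw [← lem1 g hg n j hn0]
        exact congrArg (fun f => fourierCoeff f (n * j)) hgnm
      by_cases hdvd : m ∣ n * j
      · obtain ⟨q, hq⟩ := hdvd
        have hcq : fourierCoeff g j = fourierCoeff g q := by
          rw [e1, hq]
          exact lem1 g hg m q hm0
        have hq0 : q ≠ 0 := by
          rintro rfl
          rw [mul_zero] at hq
          exact hj0 (by
            rcases mul_eq_zero.mp hq with h | h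
            · exact absurd h hn0
            · exact h)
        have hlt : q.natAbs < N := by
          have hnat : m.natAbs * q.natAbs = n.natAbs * j.natAbs := by
            have := congrArg Int.natAbs hq
            rw [Int.natAbs_mul, Int.natAbs_mul] at this
            omega
          have hjpos : 0 < j.natAbs := Int.natAbs_pos.mpr hj0
          have h5 : n.natAbs * j.natAbs < m.natAbs * j.natAbs :=
            (Nat.mul_lt_mul_right hjpos).mpr hnm
          have h6 : m.natAbs * q.natAbs < m.natAbs * j.natAbs := by omega
          have := Nat.lt_of_mul_lt_mul_left h6
          omega
        rw [hcq]
        exact ih q.natAbs hlt q rfl hq0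
      · rw [e1]
        exact lem2 g m (n * j) hm0 hdvd
  -- conclude `g` is a.e. constant via the Fourier basis
  set c0 : ℂ := fourierCoeff g 0 with hc0
  set g' : T1 → ℂ := fun x => g x - c0 with hg'def
  have hgmem : MemLp g 2 ν := by
    rw [hgdef]
    exact memLp_indicator_const 2 hAmeas (1:ℂ) (Or.inr (measure_ne_top ν A))
  have hg'mem : MemLp g' 2 ν := hgmem.sub (memLp_const c0)
  have hbound : ∀ x, ‖g x‖ ≤ 1 := by
    intro x
    rw [hgdef]
    by_cases hxA : x ∈ A <;> simp [Set.indicator_apply, hxA]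
  have hintf : ∀ (i : ℤ) (h : T1 → ℂ) (C : ℝ), Measurable h → (∀ x, ‖h x‖ ≤ C) →
      Integrable (fun t => fourier i t • h t) ν := by
    intro i h C hh hb
    refine ⟨((fourier i).continuous.measurable.smul hh).aestronglyMeasurable, ?_⟩
    refine HasFiniteIntegral.mono' (integrable_const C).hasFiniteIntegral ?_
    filter_upwards with x
    rw [norm_smul]
    have h1 : ‖(fourier i) x‖ = 1 := Circle.norm_coe _
    rw [h1, one_mul]
    exact hb x
  have hcoeff' : ∀ i : ℤ, fourierCoeff g' i = 0 := by
    intro i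
    have hintg : Integrable (fun t => fourier (-i) t • g t) ν := hintf (-i) g 1 hg hbound
    have hintc : Integrable (fun t => fourier (-i) t • (c0 : ℂ)) ν :=
      hintf (-i) (fun _ => c0) ‖c0‖ measurable_const (fun _ => le_rfl)
    have hsub : fourierCoeff g' i = fourierCoeff g i - fourierCoeff (fun _ : T1 => c0) i := by
      simp only [fourierCoeff, hg'def, smul_sub]
      rw [integral_sub hintg hintc]
    rcases eq_or_ne i 0 with rfl | hi
    · rw [hsub, fourierCoeff_const_zero, hc0, sub_self]
    · rw [hsub, fourierCoeff_const_ne c0 i hi, main i.natAbs i rfl hi, sub_zero]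
  have hg'ae : g' =ᵐ[ν] 0 := by
    set F : Lp ℂ 2 ν := hg'mem.toLp g' with hF
    have hrepr : ∀ i : ℤ, fourierBasis.repr F i = 0 := by
      intro i
      rw [fourierBasis_repr]
      have : fourierCoeff (F : T1 → ℂ) i = fourierCoeff g' i := by
        apply integral_congr_ae
        filter_upwards [hg'mem.coeFn_toLp] with x hx
        rw [hx]
      rw [this]
      exact hcoeff' i
    have hFr : fourierBasis.repr F = 0 := lp.ext (funext fun i => by
      simpa using hrepr i)
    have hF0 : F = 0 := by
      have := fourierBasis.repr.map_eq_zero_iff.mp hFr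
      exact this
    calc g' =ᵐ[ν] (F : T1 → ℂ) := (hg'mem.coeFn_toLp).symm
      _ =ᵐ[ν] 0 := by rw [hF0]; exact Lp.coeFn_zero ℂ 2 ν
  have hgae : g =ᵐ[ν] fun _ => c0 := by
    filter_upwards [hg'ae] with x hx
    have hx' : g x - c0 = 0 := by simpa using hx
    exact sub_eq_zero.mp hx'
  -- identify the constant and conclude
  have hr : c0 = ((ν A).toReal : ℂ) := by
    rw [hc0, fourierCoeff]
    simp only [neg_zero, fourier_zero, one_smul]
    rw [hgdef, integral_indicator_const (1:ℂ) hAmeas]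
    simp [measureReal_def, hν]
  have hsq : c0 * c0 = c0 := by
    have hsq' : ∀ᵐ x ∂ν, c0 * c0 = c0 := by
      filter_upwards [hgae] with x hx
      have hgg : g x * g x = g x := by
        rw [hgdef]; by_cases hxA : x ∈ A <;> simp [Set.indicator_apply, hxA]
      rw [← hx]; exact hgg
    haveI : (ae ν).NeBot := IsProbabilityMeasure.ae_neBot
    obtain ⟨_, h⟩ := hsq'.exists
    exact h
  set r : ℝ := (ν A).toReal with hrdef
  have hrr : r * r = r := by
    have := hsq
    rw [hr] at this
    exact_mod_cast this
  have h01 : r = 0 ∨ r = 1 := by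
    have h' : r * (r - 1) = 0 := by ring_nf; linarith
    rcases mul_eq_zero.mp h' with h | h
    · exact Or.inl h
    · exact Or.inr (by linarith)
  rcases h01 with h | h
  · left
    rw [hμE]
    rcases (ENNReal.toReal_eq_zero_iff (ν A)).mp h with h' | h'
    · exact h'
    · exact absurd h' (measure_ne_top ν A)
  · right
    rw [hμE]
    exact (ENNReal.toReal_eq_one_iff (ν A)).mp h
end

section
/- Let n, m be integers with 2 ≤ n < |m|, let μ be the normalized Haar probability measure on 𝕋, and let a, b be natural numbers. Let S ⊆ 𝕋 be a Borel set and φ : 𝕋 → 𝕋 a Borel map that is injective on S, whose image φ(S) is a Borel set, and which satisfies φ(y)^{(m^a · n^b)} = y^{(n^a · m^b)} for all y ∈ S. Then μ(φ(S)) = (n/|m|)^{a−b} · μ(S), where (n/|m|)^{a−b} is the real number n/|m| raised to the integer power a − b. (In particular, the Radon–Nikodym cocycle of R_{n,m} takes only values in log(n/|m|)·ℤ, and equals log(n/|m|) on the set R₀ = {(y,z) : y^m = z^n}.) -/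
open MeasureTheory

namespace RnmAux
open Real


lemma exp_zpow (x : ℝ) (k : ℤ) : Circle.exp (k * x) = Circle.exp x ^ k := by
  have hn : ∀ (j : ℕ), Circle.exp (j * x) = Circle.exp x ^ j := by
    intro j
    induction j with
    | zero => simp
    | succ j ih =>
        rw [pow_succ, ← ih, ← Circle.exp_add]
        congr 1
        push_cast
        ring
  cases k with
  | ofNat j => simpa using hn j
  | negSucc j =>
      rw [zpow_negSucc, ← hn (j + 1), ← Circle.exp_neg]
      congr 1
      push_cast
      ring

lemma pow_surj (k : ℤ) (hk : k ≠ 0) : Function.Surjective (fun z : Circle => z ^ k) := by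
  intro w
  refine ⟨Circle.exp (Complex.arg w / k), ?_⟩
  have hk' : (k : ℝ) ≠ 0 := Int.cast_ne_zero.2 hk
  simp only
  rw [← exp_zpow]
  rw [mul_div_cancel₀ _ hk', Circle.exp_arg]



noncomputable def zeta (L : ℕ) (j : ℕ) : Circle := Circle.exp (2 * π * j / L)

lemma zeta_pow (L : ℕ) (hL : 0 < L) (j : ℕ) : zeta L j ^ (L : ℤ) = 1 := by
  rw [zeta, ← exp_zpow]
  have hL' : (L : ℝ) ≠ 0 := Nat.cast_ne_zero.2 hL.ne'
  have h : ((L : ℤ) : ℝ) * (2 * π * j / L) = (j : ℤ) * (2 * π) := by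
    push_cast
    field_simp
  rw [h]
  exact Circle.exp_int_mul_two_pi j

lemma zeta_pow_k (L : ℕ) (hL : 0 < L) (k : ℤ) (hk : k.natAbs = L) (j : ℕ) :
    zeta L j ^ k = 1 := by
  rcases Int.natAbs_eq k with h | h <;> rw [hk] at h <;> rw [h]
  · exact zeta_pow L hL j
  · rw [zpow_neg, zeta_pow L hL j, inv_one]

lemma zeta_inj (L : ℕ) {i j : ℕ} (hi : i < L) (hj : j < L) (h : zeta L i = zeta L j) :
    i = j := by
  rw [zeta, zeta, Circle.exp_eq_exp] at h
  obtain ⟨mm, hm⟩ := h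
  have hL' : (L : ℝ) ≠ 0 := Nat.cast_ne_zero.2 (by omega)
  have hπ : (0:ℝ) < 2 * π := by positivity
  field_simp at hm
  have key : (i:ℝ) = (j:ℝ) + mm * L := by
    have h2 : (2*π) * (i:ℝ) = (2*π) * ((j:ℝ) + mm*L) := by linear_combination (2*π) * hm
    exact mul_left_cancel₀ (ne_of_gt hπ) h2
  have keyZ : (i:ℤ) = (j:ℤ) + mm * L := by exact_mod_cast key
  have hL0 : (0:ℤ) < L := by exact_mod_cast (by omega : 0 < L)
  have hiZ : (i:ℤ) < L := by exact_mod_cast hi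
  have hjZ : (j:ℤ) < L := by exact_mod_cast hj
  have hi0 : (0:ℤ) ≤ i := Int.natCast_nonneg i
  have hj0 : (0:ℤ) ≤ j := Int.natCast_nonneg j
  have hmm : mm = 0 := by
    by_contra hne
    rcases lt_or_gt_of_ne hne with h | h
    · have h1 : mm ≤ -1 := by omega
      have h2 : mm * L ≤ -1 * L := mul_le_mul_of_nonneg_right h1 hL0.le
      linarith
    · have h1 : (1:ℤ) ≤ mm := by omega
      have h2 : 1 * (L:ℤ) ≤ mm * L := mul_le_mul_of_nonneg_right h1 hL0.le
      linarith
  rw [hmm] at keyZ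
  simp at keyZ
  exact_mod_cast keyZ

lemma zeta_surj (L : ℕ) (hL : 0 < L) (ζ : Circle) (h : ζ ^ (L:ℤ) = 1) :
    ∃ j : ℕ, j < L ∧ ζ = zeta L j := by
  have hL' : (L : ℝ) ≠ 0 := Nat.cast_ne_zero.2 hL.ne'
  have hL0 : (0:ℤ) < L := by exact_mod_cast hL
  have harg : Circle.exp (((L:ℤ):ℝ) * Complex.arg ζ) = 1 := by
    rw [exp_zpow, Circle.exp_arg, h]
  obtain ⟨nn, hnn⟩ := Circle.exp_eq_one.1 harg
  have hr0 : (0:ℤ) ≤ nn % L := Int.emod_nonneg nn (by exact_mod_cast hL.ne')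
  have hrL : nn % (L:ℤ) < L := Int.emod_lt_of_pos nn hL0
  refine ⟨(nn % L).toNat, by omega, ?_⟩
  rw [zeta, ← Circle.exp_arg ζ, Circle.exp_eq_exp]
  refine ⟨nn / L, ?_⟩
  have hdm : (L:ℤ) * (nn / L) + nn % L = nn := Int.mul_ediv_add_emod nn L
  have hdmR : (L:ℝ) * ((nn / L : ℤ) : ℝ) + ((nn % L : ℤ) : ℝ) = (nn : ℝ) := by
    exact_mod_cast congrArg (fun z : ℤ => (z : ℝ)) hdm
  have hcast : (((nn % L).toNat : ℕ) : ℝ) = ((nn % L : ℤ) : ℝ) := by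
    exact_mod_cast congrArg (fun z : ℤ => (z : ℝ)) (Int.toNat_of_nonneg hr0)
  have hargv : Complex.arg ζ = (nn : ℝ) * (2*π) / L := by
    rw [eq_div_iff hL']
    push_cast at hnn
    linarith [hnn]
  rw [hargv, hcast, ← hdmR]
  field_simp
  ring



lemma map_pow_eq (μ : Measure Circle) [μ.IsHaarMeasure] [IsProbabilityMeasure μ]
    (k : ℤ) (hk : k ≠ 0) : Measure.map (fun z : Circle => z ^ k) μ = μ := by
  have hc : Continuous (fun z : Circle => z ^ k) := continuous_zpow k
  have h1 : (Measure.map (fun z : Circle => z ^ k) μ).IsHaarMeasure :=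
    Measure.isHaarMeasure_map_of_isFiniteMeasure μ (zpowGroupHom k) hc (pow_surj k hk)
  have h2 : IsProbabilityMeasure (Measure.map (fun z : Circle => z ^ k) μ) :=
    Measure.isProbabilityMeasure_map hc.measurable.aemeasurable
  exact Measure.isHaarMeasure_eq_of_isProbabilityMeasure _ μ

lemma measure_preimage_pow (μ : Measure Circle) [μ.IsHaarMeasure] [IsProbabilityMeasure μ]
    (k : ℤ) (hk : k ≠ 0) {A : Set Circle} (hA : MeasurableSet A) :
    μ ((fun z : Circle => z ^ k) ⁻¹' A) = μ A := by
  conv_rhs => rw [← map_pow_eq μ k hk]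
  rw [Measure.map_apply (continuous_zpow k).measurable hA]


lemma pow_natAbs_eq_one {ζ : Circle} (k : ℤ) (hk : k ≠ 0) (h : ζ ^ k = 1) :
    ζ ^ (k.natAbs : ℤ) = 1 := by
  rcases Int.natAbs_eq k with he | he
  · rw [← he]; exact h
  · have : ζ ^ (-(k.natAbs:ℤ)) = 1 := by rw [← he]; exact h
    rw [zpow_neg] at this
    rw [← inv_inv (ζ ^ (k.natAbs:ℤ)), this, inv_one]

lemma measure_image_pow (μ : Measure Circle) [μ.IsHaarMeasure] [IsProbabilityMeasure μ]
    (k : ℤ) (hk : k ≠ 0) {T : Set Circle} (hT : MeasurableSet T)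
    (hinj : Set.InjOn (fun z : Circle => z ^ k) T) :
    μ ((fun z : Circle => z ^ k) '' T) = (k.natAbs : ENNReal) * μ T := by
  set L := k.natAbs with hLdef
  have hL : 0 < L := Int.natAbs_pos.2 hk
  have himg : MeasurableSet ((fun z : Circle => z ^ k) '' T) :=
    hT.image_of_measurable_injOn (continuous_zpow k).measurable hinj
  have hzk : ∀ j : ℕ, zeta L j ^ k = 1 := fun j => zeta_pow_k L hL k rfl j
  have hpre : (fun z : Circle => z ^ k) ⁻¹' ((fun z : Circle => z ^ k) '' T)
      = ⋃ j ∈ Finset.range L, (fun t => zeta L j * t) '' T := by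
    ext z
    simp only [Set.mem_preimage, Set.mem_image, Finset.mem_range, Set.mem_iUnion]
    constructor
    · rintro ⟨t, htT, hkt⟩
      have h1 : (z * t⁻¹) ^ k = 1 := by
        rw [mul_zpow, inv_zpow, ← hkt]
        simp
      obtain ⟨j, hj, hje⟩ := zeta_surj L hL _ (pow_natAbs_eq_one k hk h1)
      refine ⟨j, hj, t, htT, ?_⟩
      rw [← hje]
      simp [mul_assoc]
    · rintro ⟨j, hj, t, htT, hze⟩
      refine ⟨t, htT, ?_⟩
      rw [← hze, mul_zpow, hzk j, one_mul]
  have hdisj : Set.PairwiseDisjoint ↑(Finset.range L)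
      (fun j : ℕ => (fun t => zeta L j * t) '' T) := by
    intro i hi j hj hij
    simp only [Finset.coe_range, Set.mem_Iio] at hi hj
    refine Set.disjoint_left.2 ?_
    rintro x ⟨t, htT, rfl⟩ ⟨s, hsT, hse⟩
    have hse' : zeta L j * s = zeta L i * t := hse
    have hts : t = s := by
      apply hinj htT hsT
      have h1 : (zeta L i * t) ^ k = t ^ k := by rw [mul_zpow, hzk i, one_mul]
      have h2 : (zeta L j * s) ^ k = s ^ k := by rw [mul_zpow, hzk j, one_mul]
      show t ^ k = s ^ k
      rw [← h1, ← h2, hse']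
    apply hij
    refine zeta_inj L hi hj ?_
    rw [← hts] at hse'
    exact (mul_right_cancel hse').symm
  have hmeasj : ∀ j : ℕ, MeasurableSet ((fun t => zeta L j * t) '' T) := by
    intro j
    rw [Set.image_mul_left]
    exact (measurable_const_mul _) hT
  calc μ ((fun z : Circle => z ^ k) '' T)
      = μ ((fun z : Circle => z ^ k) ⁻¹' ((fun z : Circle => z ^ k) '' T)) :=
        (measure_preimage_pow μ k hk himg).symm
    _ = ∑ j ∈ Finset.range L, μ ((fun t => zeta L j * t) '' T) := by
        rw [hpre]
        exact measure_biUnion_finset hdisj (fun j _ => hmeasj j)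
    _ = ∑ j ∈ Finset.range L, μ T := by
        refine Finset.sum_congr rfl fun j _ => ?_
        rw [Set.image_mul_left]
        exact measure_preimage_mul μ _ T
    _ = (L : ENNReal) * μ T := by
        rw [Finset.sum_const, Finset.card_range, nsmul_eq_mul]


lemma cont_coe : Continuous (fun z : Circle => (z : ℂ)) := continuous_induced_dom
lemma meas_arg : Measurable (fun z : Circle => Complex.arg (z : ℂ)) :=
  Complex.measurable_arg.comp cont_coe.measurable

def arc (L : ℕ) (j : ℕ) : Set Circle :=
  (fun z : Circle => Complex.arg (z : ℂ)) ⁻¹' Set.Ioc (-π + 2*π*j/L) (-π + 2*π*(j+1)/L)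

lemma measurable_arc (L j : ℕ) : MeasurableSet (arc L j) :=
  meas_arg measurableSet_Ioc

lemma mem_arc {L j : ℕ} {z : Circle} :
    z ∈ arc L j ↔ (-π + 2*π*j/L < Complex.arg (z:ℂ) ∧ Complex.arg (z:ℂ) ≤ -π + 2*π*(j+1)/L) := by
  simp [arc, Set.mem_Ioc]

lemma arc_cover (L : ℕ) (hL : 0 < L) (z : Circle) : ∃ j : ℕ, j < L ∧ z ∈ arc L j := by
  have hL' : (L : ℝ) ≠ 0 := Nat.cast_ne_zero.2 hL.ne'
  have hLpos : (0:ℝ) < L := by positivity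
  have hπ : (0:ℝ) < π := pi_pos
  set x := Complex.arg (z : ℂ) with hx
  have hx1 : -π < x := Complex.neg_pi_lt_arg _
  have hx2 : x ≤ π := Complex.arg_le_pi _
  set t : ℝ := (x + π) * L / (2*π) with ht
  have ht0 : 0 < t := div_pos (mul_pos (by linarith) hLpos) (by positivity)
  have htL : t ≤ L := by
    rw [ht, div_le_iff₀ (by positivity)]
    nlinarith
  set c : ℤ := ⌈t⌉ with hc
  have hc1 : 1 ≤ c := Int.ceil_pos.2 ht0
  have hcL : c ≤ (L:ℤ) := Int.ceil_le.2 (by exact_mod_cast htL)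
  set j : ℕ := (c-1).toNat with hj
  have hjc : (j:ℤ) = c - 1 := Int.toNat_of_nonneg (by omega)
  have hjL : j < L := by omega
  have hjR : (j:ℝ) = (c:ℝ) - 1 := by exact_mod_cast hjc
  have hlt : (j:ℝ) < t := by
    rw [hjR]
    linarith [Int.ceil_lt_add_one t]
  have hle : t ≤ (j:ℝ) + 1 := by
    rw [hjR]
    linarith [Int.le_ceil t]
  have hteq : 2*π*t/L = x + π := by
    rw [ht]
    field_simp
  refine ⟨j, hjL, mem_arc.2 ⟨?_, ?_⟩⟩
  · have h1 : 2*π*(j:ℝ)/L < 2*π*t/L := by gcongr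
    rw [hteq] at h1
    linarith
  · have h1 : 2*π*t/L ≤ 2*π*((j:ℝ)+1)/L := by gcongr
    rw [hteq] at h1
    linarith

lemma arc_injOn (k : ℤ) (hk : k ≠ 0) (j : ℕ) :
    Set.InjOn (fun z : Circle => z ^ k) (arc k.natAbs j) := by
  set L := k.natAbs with hL
  have hLpos : 0 < L := Int.natAbs_pos.2 hk
  have hL' : (L : ℝ) ≠ 0 := Nat.cast_ne_zero.2 hLpos.ne'
  have hLR : (0:ℝ) < L := by positivity
  have hπ : (0:ℝ) < π := pi_pos
  have hkabs : |(k:ℝ)| = (L:ℝ) := by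
    rw [← Int.cast_abs, Int.abs_eq_natAbs]
    norm_cast
  intro z hz w hw hzw
  have hz' := mem_arc.1 hz
  have hw' := mem_arc.1 hw
  set x := Complex.arg (z:ℂ) with hxd
  set y := Complex.arg (w:ℂ) with hyd
  have hgap : 2*π*((j:ℝ)+1)/L - 2*π*(j:ℝ)/L = 2*π/L := by
    field_simp
    ring
  have hdiff : |x - y| < 2*π/L := by
    rw [abs_lt]
    constructor
    · linarith [hz'.1, hz'.2, hw'.1, hw'.2, hgap]
    · linarith [hz'.1, hz'.2, hw'.1, hw'.2, hgap]
  have hzz : Circle.exp ((k:ℝ) * x) = Circle.exp ((k:ℝ) * y) := by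
    rw [exp_zpow, exp_zpow, hxd, hyd, Circle.exp_arg, Circle.exp_arg]
    exact hzw
  obtain ⟨mm, hmm⟩ := Circle.exp_eq_exp.1 hzz
  have e1 : (k:ℝ) * (x - y) = mm * (2*π) := by linarith [hmm]
  have e2 : |(mm:ℝ)| * (2*π) = (L:ℝ) * |x - y| := by
    have h5 : |(k:ℝ) * (x - y)| = |(mm:ℝ) * (2*π)| := by rw [e1]
    rw [abs_mul, abs_mul, hkabs, abs_of_pos (show (0:ℝ) < 2*π by positivity)] at h5
    linarith [h5]
  have e3 : (L:ℝ) * |x - y| < 2*π := by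
    have := mul_lt_mul_of_pos_left hdiff hLR
    calc (L:ℝ) * |x - y| < L * (2*π/L) := this
      _ = 2*π := by field_simp
  have e4 : |(mm:ℝ)| < 1 := by
    have h2π : (0:ℝ) < 2*π := by positivity
    nlinarith [e2, e3]
  have hm0 : mm = 0 := by
    have h6 : |mm| < 1 := by exact_mod_cast e4
    have := abs_lt.1 h6
    omega
  have hxy : x = y := by
    have hk' : (k:ℝ) ≠ 0 := Int.cast_ne_zero.2 hk
    rw [hm0] at hmm
    have h7 : (k:ℝ) * x = (k:ℝ) * y := by push_cast at hmm; linarith [hmm]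
    exact mul_left_cancel₀ hk' h7
  exact Circle.injective_arg hxy


lemma arc_disjoint (L : ℕ) (hL : 0 < L) {i j : ℕ} (hij : i ≠ j) :
    Disjoint (arc L i) (arc L j) := by
  have hLR : (0:ℝ) < L := by exact_mod_cast hL
  have hπ : (0:ℝ) < π := pi_pos
  rw [Set.disjoint_left]
  intro z hzi hzj
  have h1 := mem_arc.1 hzi
  have h2 := mem_arc.1 hzj
  rcases Nat.lt_or_ge i j with h | h
  · have hij1 : (i:ℝ) + 1 ≤ j := by exact_mod_cast h
    have hmono : 2*π*((i:ℝ)+1)/L ≤ 2*π*(j:ℝ)/L := by gcongr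
    linarith [h1.2, h2.1]
  · have h' : j < i := by omega
    have hij1 : (j:ℝ) + 1 ≤ i := by exact_mod_cast h'
    have hmono : 2*π*((j:ℝ)+1)/L ≤ 2*π*(i:ℝ)/L := by gcongr
    linarith [h2.2, h1.1]

end RnmAux

open RnmAux

/-- For `2 ≤ n < |m|`, `μ` the normalized Haar probability measure on `𝕋` and `a, b ∈ ℕ`:
if `S ⊆ 𝕋` is Borel and `φ : 𝕋 → 𝕋` is a Borel map, injective on `S`, with `φ(S)` Borel,
satisfying `φ(y)^{m^a·n^b} = y^{n^a·m^b}` for all `y ∈ S`, then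
`μ(φ(S)) = (n/|m|)^{a-b} · μ(S)`. -/
theorem Rnm_radon_nikodym (n m : ℤ) (h1 : 2 ≤ n) (h2 : n < |m|)
    (μ : Measure Circle) [μ.IsHaarMeasure] [IsProbabilityMeasure μ]
    (a b : ℕ) (S : Set Circle) (hS : MeasurableSet S)
    (φ : Circle → Circle) (hφmeas : Measurable φ)
    (hφinj : Set.InjOn φ S) (himg : MeasurableSet (φ '' S))
    (hφ : ∀ y ∈ S, φ y ^ (m ^ a * n ^ b) = y ^ (n ^ a * m ^ b)) :
    μ (φ '' S) = ENNReal.ofReal (((n : ℝ) / |(m : ℝ)|) ^ ((a : ℤ) - (b : ℤ))) * μ S := by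
  classical
  have hm0 : m ≠ 0 := by
    rcases abs_cases m with ⟨he, _⟩ | ⟨he, _⟩ <;> omega
  have hn0 : n ≠ 0 := by omega
  set K : ℤ := m ^ a * n ^ b with hKdef
  set N : ℤ := n ^ a * m ^ b with hNdef
  have hK : K ≠ 0 := mul_ne_zero (pow_ne_zero _ hm0) (pow_ne_zero _ hn0)
  have hN : N ≠ 0 := mul_ne_zero (pow_ne_zero _ hn0) (pow_ne_zero _ hm0)
  set LN := N.natAbs with hLNdef
  have hLNpos : 0 < LN := Int.natAbs_pos.2 hN
  set Sj : ℕ → Set Circle := fun j => S ∩ arc LN j with hSjdef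
  have hSjmeas : ∀ j, MeasurableSet (Sj j) := fun j => hS.inter (measurable_arc LN j)
  have hSjinj : ∀ j, Set.InjOn (fun z : Circle => z ^ N) (Sj j) := fun j =>
    (arc_injOn N hN j).mono Set.inter_subset_right
  have hφinjj : ∀ j, Set.InjOn φ (Sj j) := fun j => hφinj.mono Set.inter_subset_left
  have hcover : S = ⋃ j ∈ Finset.range LN, Sj j := by
    ext z
    simp only [Set.mem_iUnion, Finset.mem_range, hSjdef, Set.mem_inter_iff]
    constructor
    · intro hz
      obtain ⟨j, hj, hmem⟩ := arc_cover LN hLNpos z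
      exact ⟨j, hj, hz, hmem⟩
    · rintro ⟨j, hj, hz, _⟩
      exact hz
  have hSjdisj : Set.PairwiseDisjoint ↑(Finset.range LN) Sj := by
    intro i _ j _ hij
    exact (arc_disjoint LN hLNpos hij).mono Set.inter_subset_right Set.inter_subset_right
  have himgj : ∀ j, MeasurableSet (φ '' Sj j) := fun j =>
    (hSjmeas j).image_of_measurable_injOn hφmeas (hφinjj j)
  have key : ∀ j, (K.natAbs : ENNReal) * μ (φ '' Sj j) = (N.natAbs : ENNReal) * μ (Sj j) := by
    intro j
    have hpinj : Set.InjOn (fun z : Circle => z ^ K) (φ '' Sj j) := by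
      rintro _ ⟨y1, hy1, rfl⟩ _ ⟨y2, hy2, rfl⟩ hkk
      have hyy : y1 ^ N = y2 ^ N := by
        rw [← hφ y1 hy1.1, ← hφ y2 hy2.1]
        exact hkk
      rw [hSjinj j hy1 hy2 hyy]
    have hB1 := measure_image_pow μ K hK (himgj j) hpinj
    have hB2 := measure_image_pow μ N hN (hSjmeas j) (hSjinj j)
    have him_eq : (fun z : Circle => z ^ K) '' (φ '' Sj j)
        = (fun z : Circle => z ^ N) '' Sj j := by
      rw [← Set.image_comp]
      exact Set.image_congr fun y hy => hφ y hy.1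
    rw [← hB1, him_eq, hB2]
  have himguni : φ '' S = ⋃ j ∈ Finset.range LN, φ '' Sj j := by
    conv_lhs => rw [hcover]
    rw [Set.image_iUnion₂]
  have himgdisj : Set.PairwiseDisjoint ↑(Finset.range LN) (fun j => φ '' Sj j) := by
    intro i hi j hj hij
    rw [Function.onFun, Set.disjoint_left]
    rintro _ ⟨x, hx, rfl⟩ ⟨y, hy, he⟩
    have hxy : y = x := hφinj hy.1 hx.1 he
    rw [hxy] at hy
    exact Set.disjoint_left.1 (hSjdisj hi hj hij) hx hy
  have hsum1 : μ (φ '' S) = ∑ j ∈ Finset.range LN, μ (φ '' Sj j) := by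
    rw [himguni]
    exact measure_biUnion_finset himgdisj fun j _ => himgj j
  have hsum2 : μ S = ∑ j ∈ Finset.range LN, μ (Sj j) := by
    conv_lhs => rw [hcover]
    exact measure_biUnion_finset hSjdisj fun j _ => hSjmeas j
  have main : (K.natAbs : ENNReal) * μ (φ '' S) = (N.natAbs : ENNReal) * μ S := by
    rw [hsum1, hsum2, Finset.mul_sum, Finset.mul_sum]
    exact Finset.sum_congr rfl fun j _ => key j
  have hcK0 : (K.natAbs : ENNReal) ≠ 0 := by
    exact_mod_cast (Int.natAbs_pos.2 hK).ne'
  have hcKtop : (K.natAbs : ENNReal) ≠ ⊤ := ENNReal.natCast_ne_top _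
  have hdiv : μ (φ '' S) = (N.natAbs : ENNReal) * μ S / (K.natAbs : ENNReal) :=
    ENNReal.eq_div_iff hcK0 hcKtop |>.2 main
  have hp : (0:ℝ) < (n:ℝ) := by exact_mod_cast (by omega : (0:ℤ) < n)
  have hq : (0:ℝ) < |(m:ℝ)| := by
    rw [abs_pos]
    exact_mod_cast hm0
  have hNr : ((N.natAbs : ℕ) : ℝ) = (n:ℝ)^a * |(m:ℝ)|^b := by
    rw [Nat.cast_natAbs, hNdef]
    push_cast
    rw [abs_mul, abs_pow, abs_pow, abs_of_pos hp]
  have hKr : ((K.natAbs : ℕ) : ℝ) = |(m:ℝ)|^a * (n:ℝ)^b := by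
    rw [Nat.cast_natAbs, hKdef]
    push_cast
    rw [abs_mul, abs_pow, abs_pow, abs_of_pos hp]
  have hreal : ((n : ℝ) / |(m : ℝ)|) ^ ((a:ℤ) - (b:ℤ))
      = ((n:ℝ)^a * |(m:ℝ)|^b) / (|(m:ℝ)|^a * (n:ℝ)^b) := by
    have hx : (n:ℝ)/|(m:ℝ)| ≠ 0 := by positivity
    rw [zpow_sub₀ hx, zpow_natCast, zpow_natCast, div_pow, div_pow]
    field_simp
  have hconst : ENNReal.ofReal (((n : ℝ) / |(m : ℝ)|) ^ ((a:ℤ) - (b:ℤ)))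
      = (N.natAbs : ENNReal) / (K.natAbs : ENNReal) := by
    rw [hreal, ENNReal.ofReal_div_of_pos (by positivity), ← hNr, ← hKr,
      ENNReal.ofReal_natCast, ENNReal.ofReal_natCast]
  rw [hdiv, hconst, div_eq_mul_inv, div_eq_mul_inv, mul_right_comm]
end
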